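/- arXiv:0811.2870 — 7 statements merged into one kernel-verified Lean document; each statement's English description precedes it below -/
import Mathlib

section
/- A function f : (0,∞) → ℝ is strongly completely monotonic if and only if the function x ↦ x·f(x) is completely monotonic on (0,∞). -/
open Real Set

/-- A function is completely monotonic on `(0,∞)`: it has derivatives of all orders
there and `(-1)^m f^(m)(x) ≥ 0` for all `x > 0` and all `m`. -/
def CompletelyMonotonicOn (f : ℝ → ℝ) : Prop :=
  (∀ m : ℕ, ∀ x : ℝ, 0 < x → DifferentiableAt ℝ (iteratedDeriv m f) x) ∧
  (∀ m : ℕ, ∀ x : ℝ, 0 < x → 0 ≤ (-1 : ℝ) ^ m * iteratedDeriv m f x)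

/-- A function is strongly completely monotonic on `(0,∞)`: it has derivatives of all
orders there and for every `n`, `x ↦ (-1)^n x^(n+1) f^(n)(x)` is nonnegative and
nonincreasing on `(0,∞)`. -/
def StronglyCompletelyMonotonicOn (f : ℝ → ℝ) : Prop :=
  (∀ m : ℕ, ∀ x : ℝ, 0 < x → DifferentiableAt ℝ (iteratedDeriv m f) x) ∧
  (∀ n : ℕ,
    (∀ x : ℝ, 0 < x → 0 ≤ (-1 : ℝ) ^ n * x ^ (n + 1) * iteratedDeriv n f x) ∧
    AntitoneOn (fun x : ℝ => (-1 : ℝ) ^ n * x ^ (n + 1) * iteratedDeriv n f x) (Ioi 0))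

open Filter Topology

private lemma deriv_nonpos_of_antitoneOn {F : ℝ → ℝ} {x : ℝ} (hx : 0 < x)
    (hd : DifferentiableAt ℝ F x) (ha : AntitoneOn F (Ioi 0)) : deriv F x ≤ 0 := by
  have h := hasDerivAt_iff_tendsto_slope.1 hd.hasDerivAt
  have h' : Tendsto (slope F x) (𝓝[>] x) (𝓝 (deriv F x)) :=
    h.mono_left (nhdsWithin_mono x fun y hy => ne_of_gt hy)
  refine le_of_tendsto h' ?_
  filter_upwards [self_mem_nhdsWithin] with y hy
  have hy0 : y ∈ Ioi (0:ℝ) := lt_trans hx hy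
  have hyx : x < y := hy
  have hle := ha (mem_Ioi.2 hx) hy0 (le_of_lt hyx)
  rw [slope_def_field]
  exact div_nonpos_of_nonpos_of_nonneg (by linarith) (by linarith)

private lemma iteratedDeriv_mul_aux (f : ℝ → ℝ)
    (hf : ∀ m : ℕ, ∀ x : ℝ, 0 < x → DifferentiableAt ℝ (iteratedDeriv m f) x) :
    ∀ m : ℕ, ∀ x : ℝ, 0 < x →
      DifferentiableAt ℝ (iteratedDeriv m (fun y => y * f y)) x ∧
      iteratedDeriv m (fun y => y * f y) x
        = x * iteratedDeriv m f x + m * iteratedDeriv (m - 1) f x := by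
  intro m
  induction m with
  | zero =>
    intro x hx
    have h0 : DifferentiableAt ℝ f x := by simpa using hf 0 x hx
    constructor
    · rw [iteratedDeriv_zero]
      exact differentiableAt_fun_id.mul h0
    · simp
  | succ m ih =>
    have key : ∀ x : ℝ, 0 < x → iteratedDeriv (m+1) (fun y => y * f y) x
        = x * iteratedDeriv (m+1) f x + ((m:ℝ)+1) * iteratedDeriv m f x := by
      intro x hx
      have heq : iteratedDeriv m (fun y => y * f y) =ᶠ[𝓝 x]
          (fun y => y * iteratedDeriv m f y + (m:ℝ) * iteratedDeriv (m-1) f y) := by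
        filter_upwards [isOpen_Ioi.mem_nhds hx] with y hy
        exact (ih y hy).2
      have hm : HasDerivAt (iteratedDeriv m f) (iteratedDeriv (m+1) f x) x := by
        rw [iteratedDeriv_succ]; exact (hf m x hx).hasDerivAt
      have hm1 : HasDerivAt (iteratedDeriv (m-1) f) (iteratedDeriv (m-1+1) f x) x := by
        rw [iteratedDeriv_succ]; exact (hf (m-1) x hx).hasDerivAt
      have hA := (hasDerivAt_id' (x := x)).mul hm
      have hB := hm1.const_mul (m:ℝ)
      have hAB : HasDerivAt (fun y => y * iteratedDeriv m f y + (m:ℝ) * iteratedDeriv (m-1) f y) _ x := hA.add hB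
      rw [iteratedDeriv_succ, heq.deriv_eq, hAB.deriv]
      have hm0 : (m:ℝ) * iteratedDeriv (m-1+1) f x = (m:ℝ) * iteratedDeriv m f x := by
        cases m with
        | zero => simp
        | succ k => rfl
      rw [hm0]
      ring
    intro x hx
    constructor
    · have heq' : iteratedDeriv (m+1) (fun y => y * f y) =ᶠ[𝓝 x]
          (fun y => y * iteratedDeriv (m+1) f y + ((m:ℝ)+1) * iteratedDeriv m f y) := by
        filter_upwards [isOpen_Ioi.mem_nhds hx] with y hy
        exact key y hy
      refine heq'.differentiableAt_iff.2 ?_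
      exact (differentiableAt_fun_id.mul (hf (m+1) x hx)).add ((hf m x hx).const_mul _)
    · simp only [Nat.add_sub_cancel]
      rw [key x hx]
      push_cast
      ring

private lemma hasDerivAt_F_aux (f : ℝ → ℝ)
    (hfd : ∀ m : ℕ, ∀ x : ℝ, 0 < x → DifferentiableAt ℝ (iteratedDeriv m f) x)
    (n : ℕ) {x : ℝ} (hx : 0 < x) :
    HasDerivAt (fun y : ℝ => (-1:ℝ)^n * y^(n+1) * iteratedDeriv n f y)
      (((-1:ℝ)^n * x^n) * iteratedDeriv (n+1) (fun y => y * f y) x) x := by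
  have h1 : HasDerivAt (fun y:ℝ => y ^ (n+1)) (((n:ℝ)+1) * x^n) x := by
    simpa using hasDerivAt_pow (n+1) x
  have h2 : HasDerivAt (iteratedDeriv n f) (iteratedDeriv (n+1) f x) x := by
    rw [iteratedDeriv_succ]; exact (hfd n x hx).hasDerivAt
  have h3 : HasDerivAt (fun y : ℝ => (-1:ℝ)^n * y^(n+1) * iteratedDeriv n f y) _ x := (h1.const_mul ((-1:ℝ)^n)).mul h2
  have hg := (iteratedDeriv_mul_aux f hfd (n+1) x hx).2
  simp only [Nat.add_sub_cancel] at hg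
  convert h3 using 1
  rw [hg]
  push_cast
  ring

private lemma contDiffOn_iter (g : ℝ → ℝ)
    (hg : ∀ m : ℕ, ∀ x : ℝ, 0 < x → DifferentiableAt ℝ (iteratedDeriv m g) x) :
    ∀ n : ℕ, ∀ m : ℕ, ContDiffOn ℝ n (iteratedDeriv m g) (Ioi 0) := by
  intro n
  induction n with
  | zero =>
    intro m
    rw [show ((0:ℕ):WithTop ℕ∞) = 0 from rfl, contDiffOn_zero]
    exact fun x hx => ((hg m x hx).continuousAt).continuousWithinAt
  | succ n ih =>
    intro m
    have hcast : ((n+1:ℕ):WithTop ℕ∞) = (n:WithTop ℕ∞) + 1 := by push_cast; rfl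
    rw [hcast, contDiffOn_succ_iff_deriv_of_isOpen isOpen_Ioi]
    refine ⟨fun x hx => (hg m x hx).differentiableWithinAt, ?_, ?_⟩
    · intro h; simp at h
    · rw [← iteratedDeriv_succ]; exact ih (m+1)

private lemma diff_of_contDiffOn (f : ℝ → ℝ)
    (h : ∀ n : ℕ, ContDiffOn ℝ n f (Ioi 0)) :
    ∀ m : ℕ, ∀ x : ℝ, 0 < x → DifferentiableAt ℝ (iteratedDeriv m f) x := by
  have H : ∀ m : ℕ, ∀ n : ℕ, ContDiffOn ℝ n (iteratedDeriv m f) (Ioi 0) := by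
    intro m
    induction m with
    | zero => intro n; simpa [iteratedDeriv_zero] using h n
    | succ m ih =>
      intro n
      have hcast : ((n+1:ℕ):WithTop ℕ∞) = (n:WithTop ℕ∞) + 1 := by push_cast; rfl
      have := (contDiffOn_succ_iff_deriv_of_isOpen isOpen_Ioi).1 (by rw [← hcast]; exact ih (n+1))
      rw [iteratedDeriv_succ]
      exact this.2.2
  intro m x hx
  have h1 : DifferentiableOn ℝ (iteratedDeriv m f) (Ioi 0) :=
    (H m 1).differentiableOn (by norm_num)
  exact h1.differentiableAt (isOpen_Ioi.mem_nhds hx)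

theorem strongly_completely_monotonic_iff (f : ℝ → ℝ) :
    StronglyCompletelyMonotonicOn f ↔
      CompletelyMonotonicOn (fun x : ℝ => x * f x) := by
  constructor
  · rintro ⟨hfd, hfs⟩
    refine ⟨fun m x hx => (iteratedDeriv_mul_aux f hfd m x hx).1, ?_⟩
    intro m x hx
    cases m with
    | zero => simpa using (hfs 0).1 x hx
    | succ n =>
      have hA := hasDerivAt_F_aux f hfd n hx
      have h5 : deriv (fun y : ℝ => (-1:ℝ)^n * y^(n+1) * iteratedDeriv n f y) x ≤ 0 :=
        deriv_nonpos_of_antitoneOn hx hA.differentiableAt (hfs n).2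
      rw [hA.deriv] at h5
      have h6 : (-1:ℝ)^n * iteratedDeriv (n+1) (fun y => y * f y) x ≤ 0 := by
        by_contra hc
        push_neg at hc
        nlinarith [pow_pos hx n]
      rw [pow_succ]
      nlinarith [h6]
  · rintro ⟨hgd, hgs⟩
    have hCD : ∀ n : ℕ, ContDiffOn ℝ n f (Ioi 0) := by
      intro n
      have hg0 : ContDiffOn ℝ n (fun x : ℝ => x * f x) (Ioi 0) := by
        simpa [iteratedDeriv_zero] using contDiffOn_iter (fun x : ℝ => x * f x) hgd n 0
      have hinv : ContDiffOn ℝ n (fun x : ℝ => x⁻¹ * (x * f x)) (Ioi 0) :=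
        (contDiffOn_id.inv fun x hx => ne_of_gt hx).mul hg0
      refine hinv.congr fun x hx => ?_
      have hx0 : (x:ℝ) ≠ 0 := ne_of_gt hx
      field_simp
    have hfd : ∀ m : ℕ, ∀ x : ℝ, 0 < x → DifferentiableAt ℝ (iteratedDeriv m f) x :=
      diff_of_contDiffOn f hCD
    refine ⟨hfd, ?_⟩
    intro n
    constructor
    · induction n with
      | zero =>
        intro x hx
        simpa using hgs 0 x hx
      | succ n ihn =>
        intro x hx
        have h1 := hgs (n+1) x hx
        have hf1 := (iteratedDeriv_mul_aux f hfd (n+1) x hx).2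
        simp only [Nat.add_sub_cancel] at hf1
        rw [hf1] at h1
        have h2 := ihn x hx
        have key : (-1:ℝ)^(n+1) * x^(n+1+1) * iteratedDeriv (n+1) f x
            = x^(n+1) * ((-1:ℝ)^(n+1) * (x * iteratedDeriv (n+1) f x + ((n:ℝ)+1) * iteratedDeriv n f x))
              + ((n:ℝ)+1) * ((-1:ℝ)^n * x^(n+1) * iteratedDeriv n f x) := by
          ring
        rw [key]
        have e1 : 0 ≤ x^(n+1) * ((-1:ℝ)^(n+1) * (x * iteratedDeriv (n+1) f x + ((n:ℝ)+1) * iteratedDeriv n f x)) := by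
          refine mul_nonneg (pow_pos hx _).le ?_
          push_cast at h1
          linarith
        have e2 : 0 ≤ ((n:ℝ)+1) * ((-1:ℝ)^n * x^(n+1) * iteratedDeriv n f x) :=
          mul_nonneg (by positivity) h2
        linarith
    · refine antitoneOn_of_deriv_nonpos (convex_Ioi 0) ?_ ?_ ?_
      · intro x hx
        exact ((((differentiableAt_pow (n+1)).const_mul ((-1:ℝ)^n)).mul (hfd n x hx)).continuousAt).continuousWithinAt
      · rw [interior_Ioi]
        intro x hx
        exact ((((differentiableAt_pow (n+1)).const_mul ((-1:ℝ)^n)).mul (hfd n x hx))).differentiableWithinAt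
      · rw [interior_Ioi]
        intro x hx
        have hx' : (0:ℝ) < x := hx
        have hA := hasDerivAt_F_aux f hfd n hx'
        rw [hA.deriv]
        have h1 := hgs (n+1) x hx'
        rw [pow_succ] at h1
        have h6 : (-1:ℝ)^n * iteratedDeriv (n+1) (fun y => y * f y) x ≤ 0 := by nlinarith
        nlinarith [pow_pos hx' n, h6]
end

section
/- For every integer n ≥ 0, the function ξ_n(x) = x^n/(1+x) satisfies ξ_n^{(k)}(x) > 0 for every integer k with 0 ≤ k ≤ n and every x > 0. -/
open Set Filter

noncomputable def Fxi (n : ℕ) : ℝ → ℝ := fun x => x ^ n / (1 + x)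

lemma sOpen : IsOpen (Ioi (-1 : ℝ)) := isOpen_Ioi

lemma one_add_pos {x : ℝ} (hx : x ∈ Ioi (-1 : ℝ)) : 0 < 1 + x := by
  have := hx; simp only [mem_Ioi] at this; linarith

lemma Fxi_contDiffOn (n : ℕ) : ContDiffOn ℝ ⊤ (Fxi n) (Ioi (-1 : ℝ)) := by
  apply ContDiffOn.div (contDiff_id.pow n).contDiffOn
    ((contDiff_const.add contDiff_id).contDiffOn)
  intro x hx
  exact ne_of_gt (one_add_pos hx)

lemma Fxi_iter_diff (n k : ℕ) {x : ℝ} (hx : x ∈ Ioi (-1 : ℝ)) :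
    DifferentiableAt ℝ (iteratedDeriv k (Fxi n)) x := by
  have h1 : Set.EqOn (iteratedDerivWithin k (Fxi n) (Ioi (-1 : ℝ)))
      (iteratedDeriv k (Fxi n)) (Ioi (-1 : ℝ)) := by
    intro y hy
    rw [iteratedDerivWithin, iteratedDeriv, iteratedFDerivWithin_of_isOpen k sOpen hy]
  have h2 : DifferentiableWithinAt ℝ (iteratedDerivWithin k (Fxi n) (Ioi (-1 : ℝ)))
      (Ioi (-1 : ℝ)) x :=
    (Fxi_contDiffOn n).differentiableOn_iteratedDerivWithin
      (by exact_mod_cast WithTop.coe_lt_top _) (sOpen.uniqueDiffOn) x hx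
  have h3 : DifferentiableWithinAt ℝ (iteratedDeriv k (Fxi n)) (Ioi (-1 : ℝ)) x :=
    h2.congr (fun y hy => (h1 hy).symm) (h1 hx).symm
  exact h3.differentiableAt (sOpen.mem_nhds hx)

lemma Fxi_rec (n k : ℕ) : ∀ x ∈ Ioi (-1 : ℝ),
    iteratedDeriv k (Fxi (n + 1)) x
      = x * iteratedDeriv k (Fxi n) x + k * iteratedDeriv (k - 1) (Fxi n) x := by
  induction k with
  | zero =>
    intro x hx
    simp only [iteratedDeriv_zero, Fxi, Nat.cast_zero, zero_mul, add_zero]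
    rw [pow_succ]
    ring
  | succ k ih =>
    intro x hx
    rw [iteratedDeriv_succ]
    have heq : iteratedDeriv k (Fxi (n + 1)) =ᶠ[nhds x]
        (fun y => y * iteratedDeriv k (Fxi n) y + k * iteratedDeriv (k - 1) (Fxi n) y) :=
      Filter.eventuallyEq_of_mem (sOpen.mem_nhds hx) ih
    rw [heq.deriv_eq]
    have d1 : DifferentiableAt ℝ (iteratedDeriv k (Fxi n)) x := Fxi_iter_diff n k hx
    have d2 : DifferentiableAt ℝ (iteratedDeriv (k - 1) (Fxi n)) x := Fxi_iter_diff n _ hx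
    have did : DifferentiableAt ℝ (fun y : ℝ => y) x := differentiableAt_id
    rw [deriv_fun_add (did.fun_mul d1) (d2.const_mul _)]
    rw [deriv_fun_mul did d1]
    rw [deriv_const_mul _ d2]
    simp only [deriv_id'']
    rw [show deriv (iteratedDeriv k (Fxi n)) x = iteratedDeriv (k + 1) (Fxi n) x from
      (by rw [← iteratedDeriv_succ])]
    rcases Nat.eq_zero_or_pos k with hk0 | hkpos
    · subst hk0
      simp [iteratedDeriv_succ]
      ring
    · have hk1 : k - 1 + 1 = k := Nat.succ_pred_eq_of_pos hkpos
      have : deriv (iteratedDeriv (k - 1) (Fxi n)) x = iteratedDeriv k (Fxi n) x := by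
        rw [← iteratedDeriv_succ, hk1]
      rw [this]
      have hsub : (k + 1 : ℕ) - 1 = k := rfl
      rw [hsub]
      push_cast
      ring

lemma Fxi_zero_iter (k : ℕ) : ∀ x ∈ Ioi (-1 : ℝ),
    iteratedDeriv k (Fxi 0) x = (-1) ^ k * (k.factorial : ℝ) / (1 + x) ^ (k + 1) := by
  induction k with
  | zero =>
    intro x hx
    simp [Fxi]
  | succ k ih =>
    intro x hx
    rw [iteratedDeriv_succ]
    have heq : iteratedDeriv k (Fxi 0) =ᶠ[nhds x]
        (fun y => (-1) ^ k * (k.factorial : ℝ) / (1 + y) ^ (k + 1)) :=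
      Filter.eventuallyEq_of_mem (sOpen.mem_nhds hx) ih
    rw [heq.deriv_eq]
    have hne : (1 + x) ≠ 0 := ne_of_gt (one_add_pos hx)
    have hpow : HasDerivAt (fun y : ℝ => (1 + y) ^ (k + 1))
        ((k + 1 : ℕ) * (1 + x) ^ k * 1) x := by
      have h1 : HasDerivAt (fun y : ℝ => 1 + y) 1 x := (hasDerivAt_id x).const_add 1
      exact (hasDerivAt_pow (k + 1) (1 + x)).comp x h1 |>.congr_deriv (by
        simp)
    have hd : HasDerivAt (fun y : ℝ => (-1) ^ k * (k.factorial : ℝ) / (1 + y) ^ (k + 1))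
        ((-1) ^ (k + 1) * ((k + 1).factorial : ℝ) / (1 + x) ^ (k + 2)) x := by
      have hinv := hpow.inv (pow_ne_zero _ hne)
      have h2 := hinv.const_mul ((-1 : ℝ) ^ k * (k.factorial : ℝ))
      have hfun : (fun y : ℝ => (-1) ^ k * (k.factorial : ℝ) / (1 + y) ^ (k + 1))
          = fun y : ℝ => (-1) ^ k * (k.factorial : ℝ) * ((1 + y) ^ (k + 1))⁻¹ := by
        funext y; rw [div_eq_mul_inv]
      rw [hfun]
      have hval : (-1 : ℝ) ^ (k + 1) * ((k + 1).factorial : ℝ) / (1 + x) ^ (k + 2)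
          = (-1 : ℝ) ^ k * (k.factorial : ℝ)
            * (-((k + 1 : ℕ) * (1 + x) ^ k * 1) / ((1 + x) ^ (k + 1)) ^ 2) := by
        rw [Nat.factorial_succ]
        push_cast
        field_simp
        ring
      rw [hval]
      exact h2
    rw [hd.deriv]

lemma Fxi_formula : ∀ n k : ℕ, n ≤ k → ∀ x ∈ Ioi (-1 : ℝ),
    iteratedDeriv k (Fxi n) x = (-1) ^ (n + k) * (k.factorial : ℝ) / (1 + x) ^ (k + 1) := by
  intro n
  induction n with
  | zero =>
    intro k hk x hx
    simpa using Fxi_zero_iter k x hx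
  | succ n ih =>
    intro k hk x hx
    rw [Fxi_rec n k x hx]
    obtain ⟨m, rfl⟩ : ∃ m, k = m + 1 := ⟨k - 1, by omega⟩
    rw [ih (m + 1) (by omega) x hx]
    simp only [Nat.add_sub_cancel]
    rw [ih m (by omega) x hx]
    have hne : (1 + x) ≠ 0 := ne_of_gt (one_add_pos hx)
    rw [Nat.factorial_succ]
    push_cast
    field_simp
    ring

lemma Fxi_pos : ∀ n k : ℕ, k ≤ n → ∀ x : ℝ, 0 < x → 0 < iteratedDeriv k (Fxi n) x := by
  intro n
  induction n with
  | zero =>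
    intro k hk x hx
    have : k = 0 := Nat.le_zero.mp hk
    subst this
    rw [iteratedDeriv_zero]
    have : Fxi 0 x = 1 / (1 + x) := by simp [Fxi]
    rw [this]
    positivity
  | succ n ih =>
    intro k hk x hx
    have hxs : x ∈ Ioi (-1 : ℝ) := by simp only [mem_Ioi]; linarith
    rcases Nat.eq_zero_or_pos k with rfl | hk1
    · rw [iteratedDeriv_zero]
      have h1x : (0 : ℝ) < 1 + x := by linarith
      exact div_pos (pow_pos hx _) h1x
    · rw [Fxi_rec n k x hxs]
      rcases Nat.lt_or_ge k (n + 1) with hlt | hge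
      · have h1 := ih k (by omega) x hx
        have h2 := ih (k - 1) (by omega) x hx
        have hkpos : (0 : ℝ) < k := by exact_mod_cast hk1
        exact add_pos (mul_pos hx h1) (mul_pos hkpos h2)
      · have hkeq : k = n + 1 := le_antisymm hk hge
        subst hkeq
        rw [Fxi_formula n (n + 1) (by omega) x hxs]
        have : (n + 1 : ℕ) - 1 = n := rfl
        rw [this, Fxi_formula n n le_rfl x hxs]
        have hodd : Odd (n + (n + 1)) := ⟨n, by ring⟩
        have heven : Even (n + n) := ⟨n, rfl⟩
        rw [hodd.neg_one_pow, heven.neg_one_pow]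
        have h1x : (0 : ℝ) < 1 + x := by linarith
        have key : x * (-1 * ((n + 1).factorial : ℝ) / (1 + x) ^ (n + 1 + 1))
            + (n + 1 : ℕ) * (1 * (n.factorial : ℝ) / (1 + x) ^ (n + 1))
            = ((n + 1).factorial : ℝ) / (1 + x) ^ (n + 2) := by
          rw [Nat.factorial_succ]
          have hne : (1 + x) ≠ 0 := ne_of_gt h1x
          push_cast
          field_simp
          ring
        rw [key]
        positivity

theorem xi_iteratedDeriv_pos (n k : ℕ) (hk : k ≤ n) (x : ℝ) (hx : 0 < x) :
    0 < iteratedDeriv k (fun x : ℝ => x ^ n / (1 + x)) x := by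
  exact Fxi_pos n k hk x hx
end

section
/- For all integers n ≥ 0 and j ≥ 0, every integer l with 0 ≤ l ≤ j, and every t > 0, the l-th derivative of the function t ↦ t^{2j} V_n(t) is strictly positive at t. -/
open Real

/-- `V n t = ∑_{k=1}^∞ 2 / ((t² + 4π²k²)(2πk)^(2n))`. -/
noncomputable def V (n : ℕ) (t : ℝ) : ℝ :=
  ∑' k : ℕ, 2 / ((t ^ 2 + 4 * π ^ 2 * (k + 1 : ℝ) ^ 2) * (2 * π * (k + 1 : ℝ)) ^ (2 * n))

/-- `psi b j i` is the `i`-th derivative of `u ↦ u^j / (u + b)`. -/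
noncomputable def psi (b : ℝ) : ℕ → ℕ → ℝ → ℝ
  | 0, i => fun u => (-1) ^ i * (Nat.factorial i) * (u + b) ^ (-1 - (i : ℤ))
  | (j+1), i => fun u => u * psi b j i u + (i : ℝ) * psi b j (i - 1) u

lemma psi_zero (b : ℝ) (j : ℕ) (u : ℝ) : psi b j 0 u = u ^ j * (u + b) ^ (-1 : ℤ) := by
  induction j with
  | zero => simp [psi]
  | succ j ih => simp [psi, ih]; ring

lemma psi_hasDerivAt (b : ℝ) (j i : ℕ) (u : ℝ) (hu : u + b ≠ 0) :
    HasDerivAt (psi b j i) (psi b j (i + 1) u) u := by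
  induction j generalizing i with
  | zero =>
    have h1 : HasDerivAt (fun u : ℝ => (u + b) ^ (-1 - (i : ℤ)))
        ((-1 - (i : ℤ)) * (u + b) ^ (-1 - (i : ℤ) - 1)) u := by
      have := (hasDerivAt_zpow (-1 - (i : ℤ)) (u + b) (Or.inl hu))
      simpa [Function.comp_def] using this.comp u ((hasDerivAt_id u).add_const b)
    have h2 := h1.const_mul ((-1 : ℝ) ^ i * (Nat.factorial i))
    have hfe : psi b 0 i = fun u : ℝ => (-1 : ℝ) ^ i * (Nat.factorial i) * (u + b) ^ (-1 - (i : ℤ)) := rfl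
    rw [hfe]
    refine h2.congr_deriv (Eq.symm ?_)
    show psi b 0 (i+1) u = _
    simp only [psi, Nat.factorial_succ, pow_succ]
    push_cast
    have he : (-1 - (i : ℤ)) - 1 = -1 - ((i : ℤ) + 1) := by ring
    rw [he]
    ring
  | succ j ih =>
    have hA : HasDerivAt (fun u => u * psi b j i u)
        (psi b j i u + u * psi b j (i + 1) u) u := by
      simpa using (hasDerivAt_id u).fun_mul (ih i)
    have hB : HasDerivAt (fun u => (i : ℝ) * psi b j (i - 1) u)
        ((i : ℝ) * psi b j (i - 1 + 1) u) u := (ih (i - 1)).const_mul _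
    have := hA.add hB
    refine this.congr_deriv (Eq.symm ?_)
    show psi b (j+1) (i+1) u = _
    rcases Nat.eq_zero_or_pos i with hi | hi
    · subst hi; simp [psi]; ring
    · have h1 : i - 1 + 1 = i := Nat.succ_pred_eq_of_pos hi
      simp only [psi, h1, Nat.add_sub_cancel]
      push_cast
      ring

/-- closed form above the top order -/
lemma psi_top (b : ℝ) (j i : ℕ) (hij : j ≤ i) (u : ℝ) (hu : u + b ≠ 0) :
    psi b j i u = (-1) ^ (i + j) * b ^ j * (Nat.factorial i) * (u + b) ^ (-1 - (i : ℤ)) := by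
  induction j generalizing i with
  | zero => simp [psi]
  | succ j ih =>
    have hi : 1 ≤ i := le_trans (Nat.succ_le_succ (Nat.zero_le j)) hij
    have h1 : i - 1 + 1 = i := Nat.succ_pred_eq_of_pos hi
    have hji : j ≤ i := le_trans (Nat.le_succ j) hij
    have hji' : j ≤ i - 1 := Nat.le_sub_one_of_lt hij
    have e1 := ih i hji
    have e2 := ih (i - 1) hji'
    show u * psi b j i u + (i : ℝ) * psi b j (i-1) u = _
    rw [e1, e2]
    have hf : (Nat.factorial (i-1) : ℝ) * i = Nat.factorial i := by
      rw [← h1, Nat.factorial_succ]; push_cast [h1]; ring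
    have hpow : (u + b) ^ (-1 - ((i:ℤ) - 1)) = (u + b) * (u + b) ^ (-1 - (i:ℤ)) := by
      rw [← zpow_one_add₀ hu]; congr 1; ring
    have hcast : ((i - 1 : ℕ) : ℤ) = (i : ℤ) - 1 := by
      push_cast [hi]; ring
    have hsgn : (-1 : ℝ) ^ (i - 1 + j) = (-1) ^ (i + j) * (-1) := by
      have h2 : i + j = (i - 1 + j) + 1 := by omega
      rw [h2, pow_succ]; ring
    have hsgn2 : (-1 : ℝ) ^ (i + (j+1)) = (-1) ^ (i + j) * (-1) := by
      have : i + (j + 1) = (i + j) + 1 := by omega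
      rw [this, pow_succ]
    rw [hcast, hpow, hsgn, hsgn2, ← hf]
    ring

lemma psi_pos (b : ℝ) (hb : 0 < b) (j i : ℕ) (hij : i ≤ j) (u : ℝ) (hu : 0 < u) :
    0 < psi b j i u := by
  have hub : 0 < u + b := by linarith
  induction j generalizing i with
  | zero =>
    interval_cases i
    simp [psi]
    positivity
  | succ j ih =>
    rcases Nat.lt_or_ge i (j+1) with h | h
    · have h' : i ≤ j := Nat.lt_succ_iff.mp h
      show 0 < u * psi b j i u + (i:ℝ) * psi b j (i-1) u
      have t1 : 0 < u * psi b j i u := mul_pos hu (ih i h')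
      rcases Nat.eq_zero_or_pos i with hi | hi
      · subst hi; simpa using t1
      · have t2 : 0 < (i:ℝ) * psi b j (i-1) u := by
          have := ih (i-1) (by omega)
          positivity
        linarith
    · have hi : i = j + 1 := le_antisymm hij h
      subst hi
      rw [psi_top b (j+1) (j+1) le_rfl u (ne_of_gt hub)]
      have he : (-1 : ℝ) ^ ((j+1) + (j+1)) = 1 := by
        rw [← two_mul, pow_mul]; norm_num
      rw [he]
      positivity
open Real Finset

noncomputable def cc : ℕ → ℕ → ℝ
  | 0, i => if i = 0 then 1 else 0
  | (l+1), i => ((2*i : ℝ) - l) * cc l i + (if i = 0 then 0 else 2 * cc l (i-1))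

lemma cc_zero_big : ∀ l i, l < i → cc l i = 0 := by
  intro l
  induction l with
  | zero =>
    intro i hi
    have : i ≠ 0 := by omega
    simp [cc, this]
  | succ l ih =>
    intro i hi
    have h1 : cc l i = 0 := ih i (by omega)
    have h2 : i ≠ 0 := by omega
    have h3 : cc l (i-1) = 0 := ih (i-1) (by omega)
    simp [cc, h1, h2, h3]

lemma cc_zero_small : ∀ l i, 2 * i < l → cc l i = 0 := by
  intro l
  induction l with
  | zero => omega
  | succ l ih =>
    intro i hi
    have h1 : ((2*i : ℝ) - l) * cc l i = 0 := by
      rcases Nat.lt_or_ge (2*i) l with h | h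
      · rw [ih i h]; ring
      · have : 2*i = l := by omega
        rw [← this]; push_cast; ring
    rcases Nat.eq_zero_or_pos i with h0 | h0
    · simp [cc, h0] at h1 ⊢; exact h1
    · have h3 : cc l (i-1) = 0 := ih (i-1) (by omega)
      simp [cc, h3, (by omega : i ≠ 0), h1]

lemma cc_nonneg : ∀ l i, 0 ≤ cc l i := by
  intro l
  induction l with
  | zero => intro i; dsimp [cc]; split <;> norm_num
  | succ l ih =>
    intro i
    have t1 : 0 ≤ ((2*i : ℝ) - l) * cc l i := by
      rcases Nat.lt_or_ge (2*i) l with h | h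
      · rw [cc_zero_small l i h]; simp
      · have : (0:ℝ) ≤ (2*i : ℝ) - l := by
          have := Nat.cast_le (α := ℝ).mpr h; push_cast at this ⊢; linarith
        exact mul_nonneg this (ih i)
    have t2 : 0 ≤ (if i = 0 then (0:ℝ) else 2 * cc l (i-1)) := by
      split
      · exact le_refl 0
      · have := ih (i-1); positivity
    show 0 ≤ ((2*i : ℝ) - l) * cc l i + (if i = 0 then 0 else 2 * cc l (i-1))
    linarith

lemma cc_diag : ∀ l, cc l l = 2 ^ l := by
  intro l
  induction l with
  | zero => simp [cc]
  | succ l ih =>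
    have h1 : cc l (l+1) = 0 := cc_zero_big l (l+1) (by omega)
    simp [cc, h1, ih]
    ring

noncomputable def chi (b : ℝ) (j l : ℕ) (t : ℝ) : ℝ :=
  (∑ i ∈ Finset.range (l+1), cc l i * t ^ (2*i) * psi b j i (t^2)) / t ^ l

lemma chi_zero (b : ℝ) (j : ℕ) (t : ℝ) : chi b j 0 t = psi b j 0 (t^2) := by
  simp [chi, cc]

lemma chi_hasDerivAt (b : ℝ) (hb : 0 < b) (j l : ℕ) (t : ℝ) (ht : 0 < t) :
    HasDerivAt (chi b j l) (chi b j (l+1) t) t := by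
  have htb : ∀ y : ℝ, y^2 + b ≠ 0 := fun y => by positivity
  have hterm : ∀ i : ℕ, HasDerivAt (fun y : ℝ => cc l i * y ^ (2*i) * psi b j i (y^2))
      (cc l i * ((2*i) * t^(2*i-1) * psi b j i (t^2)
        + t^(2*i) * (psi b j (i+1) (t^2) * (2*t)))) t := by
    intro i
    have hpsi : HasDerivAt (fun y : ℝ => psi b j i (y^2)) (psi b j (i+1) (t^2) * (2*t)) t := by
      have h2 : HasDerivAt (fun y : ℝ => y^2) (2*t) t := by
        simpa using hasDerivAt_pow 2 t
      have hc := HasDerivAt.comp (h := fun y : ℝ => y ^ 2) t (psi_hasDerivAt b j i (t^2) (htb t)) h2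
      simpa [Function.comp_def] using hc
    have := ((hasDerivAt_pow (2*i) t).fun_mul hpsi).const_mul (cc l i)
    rw [show (fun y : ℝ => cc l i * y ^ (2*i) * psi b j i (y^2)) = fun y => cc l i * (y^(2*i) * psi b j i (y^2)) by ext y; ring]
    exact this.congr_deriv (by push_cast; ring)
  have hN : HasDerivAt (fun y : ℝ => ∑ i ∈ Finset.range (l+1), cc l i * y ^ (2*i) * psi b j i (y^2))
      (∑ i ∈ Finset.range (l+1), cc l i * ((2*i) * t^(2*i-1) * psi b j i (t^2)
        + t^(2*i) * (psi b j (i+1) (t^2) * (2*t)))) t :=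
    HasDerivAt.fun_sum (fun i _ => hterm i)
  have hden : HasDerivAt (fun y : ℝ => y ^ l) ((l:ℝ) * t^(l-1)) t := hasDerivAt_pow l t
  have htl : (t : ℝ)^l ≠ 0 := by positivity
  have hdiv := hN.div hden htl
  refine hdiv.congr_deriv (Eq.symm ?_)
  show (∑ i ∈ Finset.range (l+1+1), cc (l+1) i * t ^ (2*i) * psi b j i (t^2)) / t ^ (l+1) = _
  rw [div_eq_div_iff (by positivity) (by positivity)]
  have key : (∑ i ∈ Finset.range (l+2), cc (l+1) i * t^(2*i) * psi b j i (t^2))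
      = (∑ i ∈ Finset.range (l+1), cc l i * ((2*i) * t^(2*i-1) * psi b j i (t^2)
          + t^(2*i) * (psi b j (i+1) (t^2) * (2*t)))) * t
        - l * (∑ i ∈ Finset.range (l+1), cc l i * t^(2*i) * psi b j i (t^2)) := by
    have hsplit : ∀ i : ℕ, cc (l+1) i * t^(2*i) * psi b j i (t^2)
        = ((2*i:ℝ) - l) * cc l i * t^(2*i) * psi b j i (t^2)
          + (if i = 0 then 0 else 2 * cc l (i-1) * t^(2*i) * psi b j i (t^2)) := by
      intro i
      show (((2*i : ℝ) - l) * cc l i + (if i = 0 then 0 else 2 * cc l (i-1))) * _ * _ = _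
      split <;> ring
    rw [Finset.sum_congr rfl (fun i _ => hsplit i), Finset.sum_add_distrib]
    have e1 : ∑ i ∈ Finset.range (l+2), ((2*i:ℝ) - l) * cc l i * t^(2*i) * psi b j i (t^2)
        = ∑ i ∈ Finset.range (l+1), ((2*i:ℝ) - l) * cc l i * t^(2*i) * psi b j i (t^2) := by
      rw [Finset.sum_range_succ, cc_zero_big l (l+1) (by omega)]
      ring
    have e2 : ∑ i ∈ Finset.range (l+2),
          (if i = 0 then (0:ℝ) else 2 * cc l (i-1) * t^(2*i) * psi b j i (t^2))
        = ∑ i ∈ Finset.range (l+1), 2 * cc l i * t^(2*(i+1)) * psi b j (i+1) (t^2) := by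
      rw [Finset.sum_range_succ']
      simp
    rw [e1, e2, Finset.mul_sum, Finset.sum_mul, ← Finset.sum_sub_distrib, ← Finset.sum_add_distrib]
    apply Finset.sum_congr rfl
    intro i _
    have hpow : (2*i : ℝ) * t^(2*i-1) * t = (2*i : ℝ) * t^(2*i) := by
      rcases Nat.eq_zero_or_pos i with h0 | h0
      · subst h0; norm_num
      · have h2 : 2*i - 1 + 1 = 2*i := by omega
        rw [mul_assoc, ← pow_succ, h2]
    have hpow2 : t^(2*(i+1)) = t^(2*i) * t^2 := by rw [← pow_add]; ring_nf
    rw [hpow2]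
    calc ((2*i:ℝ) - l) * cc l i * t^(2*i) * psi b j i (t^2)
          + 2 * cc l i * (t^(2*i) * t^2) * psi b j (i+1) (t^2)
        = cc l i * (((2*i:ℝ)) * t^(2*i) * psi b j i (t^2)
            + t^(2*i) * (psi b j (i+1) (t^2) * (2*t)) * t)
          - (l:ℝ) * (cc l i * t^(2*i) * psi b j i (t^2)) := by ring
      _ = _ := by rw [← hpow]; ring
  rw [key]
  have hl : (l:ℝ) * t^(l-1) * t^(l+1) = (l:ℝ) * (t^l * t^l) := by
    rcases Nat.eq_zero_or_pos l with h0 | h0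
    · subst h0; norm_num
    · have : l - 1 + (l+1) = l + l := by omega
      rw [mul_assoc, ← pow_add, this, pow_add]
  linear_combination (∑ i ∈ Finset.range (l+1), cc l i * t^(2*i) * psi b j i (t^2)) * hl

lemma chi_pos (b : ℝ) (hb : 0 < b) (j l : ℕ) (hlj : l ≤ j) (t : ℝ) (ht : 0 < t) :
    0 < chi b j l t := by
  apply div_pos _ (by positivity)
  apply Finset.sum_pos'
  · intro i hi
    have hi' : i ≤ l := by simpa [Nat.lt_succ_iff] using hi
    have := psi_pos b hb j i (le_trans hi' hlj) (t^2) (by positivity)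
    have := cc_nonneg l i
    positivity
  · refine ⟨l, by simp, ?_⟩
    have := psi_pos b hb j l hlj (t^2) (by positivity)
    rw [cc_diag]
    positivity

lemma iter_chi (b C : ℝ) (hb : 0 < b) (j : ℕ) :
    ∀ (m : ℕ) (x : ℝ), 0 < x →
      iteratedDeriv m (fun y : ℝ => C * psi b j 0 (y^2)) x = C * chi b j m x := by
  intro m
  induction m with
  | zero => intro x hx; simp [chi_zero]
  | succ m ih =>
    intro x hx
    rw [iteratedDeriv_succ]
    have hev : iteratedDeriv m (fun y : ℝ => C * psi b j 0 (y^2))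
        =ᶠ[nhds x] fun y => C * chi b j m y := by
      filter_upwards [isOpen_Ioi.mem_nhds (Set.mem_Ioi.mpr hx)] with y hy
      exact ih y hy
    rw [hev.deriv_eq]
    exact (((chi_hasDerivAt b hb j m x hx).const_mul C).deriv)

noncomputable def Abd (R : ℝ) : ℕ → ℕ → ℝ
  | 0, i => Nat.factorial i
  | (j+1), i => R * Abd R j i + i * Abd R j (i-1)

lemma Abd_nonneg (R : ℝ) (hR : 0 ≤ R) : ∀ j i, 0 ≤ Abd R j i := by
  intro j
  induction j with
  | zero => intro i; show (0:ℝ) ≤ Nat.factorial i; positivity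
  | succ j ih =>
    intro i
    have h1 := ih i
    have h2 := ih (i-1)
    show 0 ≤ R * Abd R j i + i * Abd R j (i-1)
    positivity

lemma psi_abs_le (b R : ℝ) (hb : 1 ≤ b) (hR : 0 ≤ R) :
    ∀ j i (u : ℝ), 0 ≤ u → u ≤ R → |psi b j i u| ≤ Abd R j i / b := by
  have hb0 : (0:ℝ) < b := by linarith
  intro j
  induction j with
  | zero =>
    intro i u hu huR
    have hub : (1:ℝ) ≤ u + b := by linarith
    have hub0 : (0:ℝ) < u + b := by linarith
    show |(-1)^i * (Nat.factorial i : ℝ) * (u + b) ^ (-1 - (i:ℤ))| ≤ (Nat.factorial i : ℝ) / b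
    have hz : (u + b) ^ (-1 - (i:ℤ)) = ((u + b) ^ (i+1 : ℕ))⁻¹ := by
      rw [show (-1 - (i:ℤ)) = -((i+1 : ℕ) : ℤ) by push_cast; ring, zpow_neg, zpow_natCast]
    rw [hz, abs_mul, abs_mul, abs_pow, abs_neg, abs_one, one_pow, one_mul,
      Nat.abs_cast, abs_inv, abs_of_pos (by positivity : (0:ℝ) < (u+b)^(i+1))]
    rw [div_eq_mul_inv]
    apply mul_le_mul_of_nonneg_left _ (by positivity)
    apply inv_anti₀ hb0
    calc b ≤ u + b := by linarith
      _ ≤ (u + b) ^ (i+1) := le_self_pow₀ hub (by omega)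
  | succ j ih =>
    intro i u hu huR
    show |u * psi b j i u + (i:ℝ) * psi b j (i-1) u| ≤ (R * Abd R j i + i * Abd R j (i-1)) / b
    calc |u * psi b j i u + (i:ℝ) * psi b j (i-1) u|
        ≤ |u * psi b j i u| + |(i:ℝ) * psi b j (i-1) u| := abs_add_le _ _
      _ = u * |psi b j i u| + (i:ℝ) * |psi b j (i-1) u| := by
          rw [abs_mul, abs_mul, abs_of_nonneg hu, Nat.abs_cast]
      _ ≤ R * (Abd R j i / b) + (i:ℝ) * (Abd R j (i-1) / b) := by
          have h1 := ih i u hu huR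
          have h2 := ih (i-1) u hu huR
          have hppos : 0 ≤ |psi b j i u| := abs_nonneg _
          apply add_le_add
          · apply mul_le_mul huR h1 (abs_nonneg _) hR
          · exact mul_le_mul_of_nonneg_left h2 (Nat.cast_nonneg i)
      _ = (R * Abd R j i + i * Abd R j (i-1)) / b := by ring

lemma chi_abs_le (b R : ℝ) (hb : 1 ≤ b) (hR : 1 ≤ R) (j l : ℕ) (x : ℝ)
    (hx : 0 < x) (hxR : x ≤ R) :
    |chi b j l x| ≤ (∑ i ∈ Finset.range (l+1), cc l i * R^(2*i) * Abd (R^2) j i) / b := by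
  have hb0 : (0:ℝ) < b := by linarith
  have hxl : (0:ℝ) < x ^ l := by positivity
  have hnum : |∑ i ∈ Finset.range (l+1), cc l i * x ^ (2*i) * psi b j i (x^2)|
      ≤ (∑ i ∈ Finset.range (l+1), cc l i * R^(2*i) * Abd (R^2) j i) / b * x ^ l := by
    calc |∑ i ∈ Finset.range (l+1), cc l i * x ^ (2*i) * psi b j i (x^2)|
        ≤ ∑ i ∈ Finset.range (l+1), |cc l i * x ^ (2*i) * psi b j i (x^2)| :=
          Finset.abs_sum_le_sum_abs _ _
      _ ≤ ∑ i ∈ Finset.range (l+1), cc l i * R^(2*i) * Abd (R^2) j i * (x^l / b) := by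
          apply Finset.sum_le_sum
          intro i _
          rcases eq_or_ne (cc l i) 0 with h | h
          · simp [h]
          · have hl2i : l ≤ 2*i := by
              by_contra hcon
              exact h (cc_zero_small l i (by omega))
            have hpsix : |psi b j i (x^2)| ≤ Abd (R^2) j i / b := by
              apply psi_abs_le b (R^2) hb (by positivity) j i (x^2) (by positivity)
              exact pow_le_pow_left₀ hx.le hxR 2
            have hccnn := cc_nonneg l i
            have hAnn := Abd_nonneg (R^2) (by positivity) j i
            rw [abs_mul, abs_mul, abs_of_nonneg hccnn, abs_of_pos (by positivity : (0:ℝ) < x^(2*i))]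
            calc cc l i * x^(2*i) * |psi b j i (x^2)|
                ≤ cc l i * x^(2*i) * (Abd (R^2) j i / b) := by
                  apply mul_le_mul_of_nonneg_left hpsix (by positivity)
              _ = cc l i * (x^(2*i - l) * x^l) * (Abd (R^2) j i / b) := by
                  rw [pow_sub_mul_pow x hl2i]
              _ ≤ cc l i * (R^(2*i) * x^l) * (Abd (R^2) j i / b) := by
                  have t1 : x^(2*i - l) ≤ R^(2*i - l) := pow_le_pow_left₀ hx.le hxR _
                  have t2 : R^(2*i - l) ≤ R^(2*i) := pow_le_pow_right₀ hR (Nat.sub_le _ _)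
                  have : x^(2*i - l) ≤ R^(2*i) := le_trans t1 t2
                  apply mul_le_mul_of_nonneg_right _ (by positivity)
                  apply mul_le_mul_of_nonneg_left _ hccnn
                  exact mul_le_mul_of_nonneg_right this hxl.le
              _ = cc l i * R^(2*i) * Abd (R^2) j i * (x^l / b) := by ring
      _ = (∑ i ∈ Finset.range (l+1), cc l i * R^(2*i) * Abd (R^2) j i) / b * x ^ l := by
          rw [div_mul_eq_mul_div, Finset.sum_mul, Finset.sum_div]
          exact Finset.sum_congr rfl (fun i _ => by ring)
  show |(∑ i ∈ Finset.range (l+1), cc l i * x ^ (2*i) * psi b j i (x^2)) / x ^ l| ≤ _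
  rw [abs_div, abs_of_pos hxl, div_le_iff₀ hxl]
  exact hnum

noncomputable def gg (n j k : ℕ) (x : ℝ) : ℝ :=
  x ^ (2*j) * (2 / ((x ^ 2 + 4 * π ^ 2 * ((k : ℝ) + 1) ^ 2) * (2 * π * ((k : ℝ) + 1)) ^ (2 * n)))

lemma bk_ge_one (k : ℕ) : 1 ≤ 4 * π ^ 2 * ((k : ℝ) + 1) ^ 2 := by
  have h1 : (3:ℝ) < π := pi_gt_three
  have h2 : (0:ℝ) ≤ (k : ℝ) := Nat.cast_nonneg k
  have h3 : (1:ℝ) ≤ ((k:ℝ)+1)^2 := by nlinarith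
  nlinarith

lemma bk_pos (k : ℕ) : 0 < 4 * π ^ 2 * ((k : ℝ) + 1) ^ 2 := lt_of_lt_of_le one_pos (bk_ge_one k)

lemma ak_ge_one (k : ℕ) : 1 ≤ 2 * π * ((k : ℝ) + 1) := by
  have h1 : (3:ℝ) < π := pi_gt_three
  have h2 : (0:ℝ) ≤ (k : ℝ) := Nat.cast_nonneg k
  nlinarith

lemma coef_pos (n k : ℕ) : 0 < 2 / (2 * π * ((k : ℝ) + 1)) ^ (2 * n) := by
  have := ak_ge_one k
  positivity

lemma coef_le_two (n k : ℕ) : 2 / (2 * π * ((k : ℝ) + 1)) ^ (2 * n) ≤ 2 := by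
  rw [div_le_iff₀ (by have := ak_ge_one k; positivity)]
  have h1 : (1:ℝ) ≤ (2 * π * ((k : ℝ) + 1)) ^ (2 * n) := one_le_pow₀ (ak_ge_one k)
  linarith

lemma gg_eq (n j k : ℕ) : gg n j k = fun x : ℝ =>
    (2 / (2 * π * ((k : ℝ) + 1)) ^ (2 * n)) * psi (4 * π ^ 2 * ((k : ℝ) + 1) ^ 2) j 0 (x ^ 2) := by
  funext x
  rw [psi_zero, zpow_neg_one]
  have hb : (0:ℝ) < x ^ 2 + 4 * π ^ 2 * ((k : ℝ) + 1) ^ 2 := by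
    have := bk_pos k; positivity
  have ha : (0:ℝ) < (2 * π * ((k : ℝ) + 1)) ^ (2 * n) := by
    have := ak_ge_one k; positivity
  rw [gg]
  rw [← pow_mul x 2 j] at *
  field_simp

lemma iter_gg (n j k m : ℕ) (x : ℝ) (hx : 0 < x) :
    iteratedDeriv m (gg n j k) x
      = (2 / (2 * π * ((k : ℝ) + 1)) ^ (2 * n)) * chi (4 * π ^ 2 * ((k : ℝ) + 1) ^ 2) j m x := by
  rw [gg_eq]
  exact iter_chi _ _ (bk_pos k) j m x hx

lemma iter_gg_pos (n j l k : ℕ) (hl : l ≤ j) (t : ℝ) (ht : 0 < t) :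
    0 < iteratedDeriv l (gg n j k) t := by
  rw [iter_gg n j k l t ht]
  exact mul_pos (coef_pos n k) (chi_pos _ (bk_pos k) j l hl t ht)

noncomputable def CBc (R : ℝ) (j m : ℕ) : ℝ :=
  ∑ i ∈ Finset.range (m+1), cc m i * R ^ (2*i) * Abd (R^2) j i

lemma CBc_nonneg (R : ℝ) (hR : 0 ≤ R) (j m : ℕ) : 0 ≤ CBc R j m := by
  apply Finset.sum_nonneg
  intro i _
  have h1 := cc_nonneg m i
  have h2 := Abd_nonneg (R^2) (by positivity) j i
  positivity

lemma iter_gg_bound (n j m k : ℕ) (R : ℝ) (hR : 1 ≤ R) (x : ℝ) (hx : 0 < x) (hxR : x ≤ R) :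
    ‖iteratedDeriv m (gg n j k) x‖ ≤ (2 * CBc R j m) * (1 / ((k : ℝ) + 1) ^ 2) := by
  rw [iter_gg n j k m x hx]
  rw [Real.norm_eq_abs, abs_mul, abs_of_pos (coef_pos n k)]
  have hchib := chi_abs_le (4 * π ^ 2 * ((k : ℝ) + 1) ^ 2) R (bk_ge_one k) hR j m x hx hxR
  calc (2 / (2 * π * ((k : ℝ) + 1)) ^ (2 * n)) * |chi (4 * π ^ 2 * ((k : ℝ) + 1) ^ 2) j m x|
      ≤ 2 * (CBc R j m / (4 * π ^ 2 * ((k : ℝ) + 1) ^ 2)) := by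
        apply mul_le_mul (coef_le_two n k) hchib (abs_nonneg _) (by norm_num)
    _ ≤ 2 * (CBc R j m / ((k : ℝ) + 1) ^ 2) := by
        apply mul_le_mul_of_nonneg_left _ (by norm_num)
        apply div_le_div_of_nonneg_left (CBc_nonneg R (by linarith) j m) (by positivity)
        calc ((k : ℝ) + 1) ^ 2 = 1 * ((k : ℝ) + 1) ^ 2 := by ring
          _ ≤ 4 * π ^ 2 * ((k : ℝ) + 1) ^ 2 := by
              apply mul_le_mul_of_nonneg_right _ (by positivity)
              have := pi_gt_three; nlinarith
    _ = (2 * CBc R j m) * (1 / ((k : ℝ) + 1) ^ 2) := by ring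

lemma summable_base : Summable (fun k : ℕ => 1 / ((k : ℝ) + 1) ^ 2) := by
  have h := summable_one_div_nat_pow.mpr (le_refl 2)
  have := (summable_nat_add_iff 1).mpr h
  simpa [add_comm] using this

lemma summable_iter_gg (n j m : ℕ) (R : ℝ) (hR : 1 ≤ R) (x : ℝ) (hx : 0 < x) (hxR : x ≤ R) :
    Summable (fun k => iteratedDeriv m (gg n j k) x) :=
  Summable.of_norm_bounded (summable_base.mul_left (2 * CBc R j m))
    (fun k => iter_gg_bound n j m k R hR x hx hxR)

lemma iter_tsum_gg (n j : ℕ) (R : ℝ) (hR : 1 ≤ R) :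
    ∀ m, ∀ x ∈ Set.Ioo (0:ℝ) R,
      iteratedDeriv m (fun y : ℝ => y ^ (2*j) * V n y) x = ∑' k, iteratedDeriv m (gg n j k) x := by
  intro m
  induction m with
  | zero =>
    intro x hx
    rw [iteratedDeriv_zero]
    show x ^ (2*j) * V n x = _
    rw [V, ← tsum_mul_left]
    rfl
  | succ m ih =>
    intro x hx
    rw [iteratedDeriv_succ]
    have hev : iteratedDeriv m (fun y : ℝ => y ^ (2*j) * V n y)
        =ᶠ[nhds x] fun y => ∑' k, iteratedDeriv m (gg n j k) y := by
      filter_upwards [isOpen_Ioo.mem_nhds hx] with y hy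
      exact ih y hy
    rw [hev.deriv_eq]
    have hD : HasDerivAt (fun y => ∑' k, iteratedDeriv m (gg n j k) y)
        (∑' k, iteratedDeriv (m+1) (gg n j k) x) x := by
      apply hasDerivAt_tsum_of_isPreconnected
        (u := fun k : ℕ => (2 * CBc R j (m+1)) * (1 / ((k : ℝ) + 1) ^ 2))
        (summable_base.mul_left _) isOpen_Ioo (convex_Ioo (0:ℝ) R).isPreconnected
        ?_ ?_ hx ?_ hx
      · intro k y hy
        have h1 : HasDerivAt (fun z : ℝ => (2 / (2 * π * ((k : ℝ) + 1)) ^ (2 * n))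
              * chi (4 * π ^ 2 * ((k : ℝ) + 1) ^ 2) j m z)
            ((2 / (2 * π * ((k : ℝ) + 1)) ^ (2 * n))
              * chi (4 * π ^ 2 * ((k : ℝ) + 1) ^ 2) j (m+1) y) y :=
          (chi_hasDerivAt _ (bk_pos k) j m y hy.1).const_mul _
        rw [iter_gg n j k (m+1) y hy.1]
        apply h1.congr_of_eventuallyEq
        filter_upwards [isOpen_Ioi.mem_nhds (Set.mem_Ioi.mpr hy.1)] with z hz
        exact iter_gg n j k m z hz
      · intro k y hy
        exact iter_gg_bound n j (m+1) k R hR y hy.1 hy.2.le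
      · exact summable_iter_gg n j m R hR x hx.1 hx.2.le
    exact hD.deriv

theorem iteratedDeriv_pow_mul_V_pos (n j l : ℕ) (hl : l ≤ j) (t : ℝ) (ht : 0 < t) :
    0 < iteratedDeriv l (fun t : ℝ => t ^ (2 * j) * V n t) t := by
  have hmem : t ∈ Set.Ioo (0:ℝ) (t+1) := ⟨ht, by linarith⟩
  rw [iter_tsum_gg n j (t+1) (by linarith) l t hmem]
  exact Summable.tsum_pos (summable_iter_gg n j l (t+1) (by linarith) t ht (by linarith))
    (fun k => (iter_gg_pos n j l k hl t ht).le) 0 (iter_gg_pos n j l 0 hl t ht)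
end

section
/- For every integer n ≥ 0 and every t > 0, V_n''(t) − V_n''(0) > 0, where V_n'' denotes the second derivative of V_n. -/
open Real

namespace Vaux

noncomputable def b (k : ℕ) : ℝ := 2 * π * (k + 1)

lemma b_pos (k : ℕ) : 0 < b k := by
  have := pi_pos
  unfold b; positivity

lemma b_ge (k : ℕ) : (k + 1 : ℝ) ≤ b k := by
  have h : (1 : ℝ) ≤ 2 * π := by nlinarith [pi_gt_three]
  have hk : (0 : ℝ) ≤ (k : ℝ) + 1 := by positivity
  calc (k + 1 : ℝ) = 1 * (k + 1) := by ring
    _ ≤ 2 * π * (k + 1) := by nlinarith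
    _ = b k := rfl

lemma one_le_b (k : ℕ) : (1 : ℝ) ≤ b k :=
  le_trans (by norm_num) (b_ge k)

lemma one_le_bpow (n k : ℕ) : 1 ≤ b k ^ (2 * n) := one_le_pow₀ (one_le_b k)

lemma bpow_pos (n k : ℕ) : 0 < b k ^ (2 * n) := lt_of_lt_of_le one_pos (one_le_bpow n k)

noncomputable def F (n k : ℕ) (t : ℝ) : ℝ := 2 / ((t ^ 2 + b k ^ 2) * b k ^ (2 * n))
noncomputable def F1 (n k : ℕ) (t : ℝ) : ℝ :=
  -4 * t / ((t ^ 2 + b k ^ 2) ^ 2 * b k ^ (2 * n))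
noncomputable def F2 (n k : ℕ) (t : ℝ) : ℝ :=
  (12 * t ^ 2 - 4 * b k ^ 2) / ((t ^ 2 + b k ^ 2) ^ 3 * b k ^ (2 * n))

lemma D_pos (k : ℕ) (t : ℝ) : 0 < t ^ 2 + b k ^ 2 := by
  have := b_pos k; positivity

lemma V_eq (n : ℕ) : V n = fun t => ∑' k, F n k t := by
  funext t
  exact tsum_congr fun k => by unfold F b; ring_nf

lemma hasDerivAt_F (n k : ℕ) (t : ℝ) : HasDerivAt (F n k) (F1 n k t) t := by
  have hD := D_pos k t
  have hB := bpow_pos n k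
  have hden : HasDerivAt (fun s : ℝ => (s ^ 2 + b k ^ 2) * b k ^ (2 * n))
      (2 * t * b k ^ (2 * n)) t := by
    have h1 : HasDerivAt (fun s : ℝ => s ^ 2 + b k ^ 2) (2 * t) t := by
      simpa using ((hasDerivAt_pow 2 t).add_const (b k ^ 2))
    exact h1.mul_const _
  have := (hasDerivAt_const t (2 : ℝ)).div hden (by positivity)
  refine this.congr_deriv ?_
  unfold F1
  field_simp
  ring

lemma hasDerivAt_F1 (n k : ℕ) (t : ℝ) : HasDerivAt (F1 n k) (F2 n k t) t := by
  have hD := D_pos k t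
  have hB := bpow_pos n k
  have hnum : HasDerivAt (fun s : ℝ => -4 * s) (-4) t := by
    simpa using (hasDerivAt_id t).const_mul (-4 : ℝ)
  have h1 : HasDerivAt (fun s : ℝ => s ^ 2 + b k ^ 2) (2 * t) t := by
    simpa using ((hasDerivAt_pow 2 t).add_const (b k ^ 2))
  have hden : HasDerivAt (fun s : ℝ => (s ^ 2 + b k ^ 2) ^ 2 * b k ^ (2 * n))
      (2 * (t ^ 2 + b k ^ 2) ^ 1 * (2 * t) * b k ^ (2 * n)) t :=
    (h1.pow 2).mul_const _
  have := hnum.div hden (by positivity)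
  refine this.congr_deriv ?_
  unfold F2
  field_simp
  ring

lemma bound_F1 (n k : ℕ) (t : ℝ) : ‖F1 n k t‖ ≤ 4 / (k + 1 : ℝ) ^ 3 := by
  have hD := D_pos k t
  have hB := bpow_pos n k
  have hb := b_pos k
  have hk1 : (0 : ℝ) < (k + 1 : ℝ) := by positivity
  have hBe : (1 : ℝ) ≤ b k ^ (2 * n) := one_le_bpow n k
  have hbk : (k + 1 : ℝ) ≤ b k := b_ge k
  rw [Real.norm_eq_abs]
  unfold F1
  have habs : |(-4 : ℝ) * t| = 4 * |t| := by rw [abs_mul]; norm_num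
  rw [abs_div, habs,
    abs_of_pos (show (0:ℝ) < (t ^ 2 + b k ^ 2) ^ 2 * b k ^ (2 * n) by positivity),
    div_le_div_iff₀ (by positivity) (by positivity)]
  have h1 : 2 * |t| * b k ≤ t ^ 2 + b k ^ 2 := by
    nlinarith [sq_nonneg (|t| - b k), sq_abs t]
  have h2 : b k ^ 2 ≤ t ^ 2 + b k ^ 2 := by nlinarith [sq_nonneg t]
  have h3 : (k + 1 : ℝ) ^ 3 ≤ b k ^ 3 := pow_le_pow_left₀ (by positivity) hbk 3
  have h4 : 2 * |t| * (k + 1 : ℝ) ^ 3 ≤ (t ^ 2 + b k ^ 2) ^ 2 := by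
    calc 2 * |t| * (k + 1 : ℝ) ^ 3 ≤ 2 * |t| * b k ^ 3 := by
          have := abs_nonneg t; nlinarith
      _ = (2 * |t| * b k) * b k ^ 2 := by ring
      _ ≤ (t ^ 2 + b k ^ 2) * (t ^ 2 + b k ^ 2) := by
          apply mul_le_mul h1 h2 (by positivity) (le_of_lt hD)
      _ = (t ^ 2 + b k ^ 2) ^ 2 := by ring
  have h5 : (t ^ 2 + b k ^ 2) ^ 2 ≤ (t ^ 2 + b k ^ 2) ^ 2 * b k ^ (2 * n) :=
    le_mul_of_one_le_right (by positivity) hBe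
  nlinarith [h4, h5]

lemma bound_F2 (n k : ℕ) (t : ℝ) : ‖F2 n k t‖ ≤ 12 / (k + 1 : ℝ) ^ 3 := by
  have hD := D_pos k t
  have hB := bpow_pos n k
  have hb := b_pos k
  have hk1 : (0 : ℝ) < (k + 1 : ℝ) := by positivity
  have hBe : (1 : ℝ) ≤ b k ^ (2 * n) := one_le_bpow n k
  have hb1 := one_le_b k
  have hbk := b_ge k
  rw [Real.norm_eq_abs]
  unfold F2
  rw [abs_div,
    abs_of_pos (show (0:ℝ) < (t ^ 2 + b k ^ 2) ^ 3 * b k ^ (2 * n) by positivity),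
    div_le_div_iff₀ (by positivity) (by positivity)]
  have habs : |12 * t ^ 2 - 4 * b k ^ 2| ≤ 12 * (t ^ 2 + b k ^ 2) := by
    rw [abs_le]
    constructor <;> nlinarith [sq_nonneg t, sq_nonneg (b k)]
  have h3 : (k + 1 : ℝ) ^ 3 ≤ b k ^ 3 := pow_le_pow_left₀ (by positivity) hbk 3
  have h6 : b k ^ 3 ≤ b k ^ 4 := pow_le_pow_right₀ hb1 (by norm_num)
  have h7 : b k ^ 4 ≤ (t ^ 2 + b k ^ 2) ^ 2 := by nlinarith [sq_nonneg t, sq_nonneg (t ^ 2)]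
  have h5 : (k + 1 : ℝ) ^ 3 ≤ (t ^ 2 + b k ^ 2) ^ 2 := h3.trans (h6.trans h7)
  calc |12 * t ^ 2 - 4 * b k ^ 2| * (k + 1 : ℝ) ^ 3
      ≤ (12 * (t ^ 2 + b k ^ 2)) * (t ^ 2 + b k ^ 2) ^ 2 := by
        apply mul_le_mul habs h5 (by positivity) (by positivity)
    _ = 12 * (t ^ 2 + b k ^ 2) ^ 3 := by ring
    _ ≤ 12 * ((t ^ 2 + b k ^ 2) ^ 3 * b k ^ (2 * n)) := by
        have : (t ^ 2 + b k ^ 2) ^ 3 ≤ (t ^ 2 + b k ^ 2) ^ 3 * b k ^ (2 * n) :=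
          le_mul_of_one_le_right (by positivity) hBe
        linarith

lemma summable_aux (c : ℝ) : Summable (fun k : ℕ => c / ((k : ℝ) + 1) ^ 3) := by
  have h0 : Summable (fun k : ℕ => 1 / (k : ℝ) ^ 3) :=
    Real.summable_one_div_nat_pow.2 (by norm_num)
  have h1 : Summable (fun k : ℕ => 1 / ((k : ℝ) + 1) ^ 3) := by
    have := (summable_nat_add_iff 1).2 h0
    simpa using this
  simpa [div_eq_mul_inv, mul_comm] using h1.mul_left c

lemma summable_F2 (n : ℕ) (t : ℝ) : Summable (fun k => F2 n k t) := by
  apply Summable.of_norm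
  exact Summable.of_nonneg_of_le (fun k => norm_nonneg _) (fun k => bound_F2 n k t)
    (summable_aux 12)

lemma summable_aux2 (c : ℝ) : Summable (fun k : ℕ => c / ((k : ℝ) + 1) ^ 2) := by
  have h0 : Summable (fun k : ℕ => 1 / (k : ℝ) ^ 2) :=
    Real.summable_one_div_nat_pow.2 (by norm_num)
  have h1 : Summable (fun k : ℕ => 1 / ((k : ℝ) + 1) ^ 2) := by
    have := (summable_nat_add_iff 1).2 h0
    simpa using this
  simpa [div_eq_mul_inv, mul_comm] using h1.mul_left c

lemma summable_F0 (n : ℕ) : Summable (fun k => F n k 0) := by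
  apply Summable.of_nonneg_of_le (fun k => by
      have := D_pos k 0; have := bpow_pos n k; unfold F; positivity)
    (fun k => ?_) (summable_aux2 2)
  · have hD := D_pos k 0
    have hB := bpow_pos n k
    have hk1 : (0 : ℝ) < (k + 1 : ℝ) := by positivity
    have hbk := b_ge k
    have hBe := one_le_bpow n k
    unfold F
    rw [div_le_div_iff₀ (by positivity) (by positivity)]
    have h3 : (k + 1 : ℝ) ^ 2 ≤ b k ^ 2 := pow_le_pow_left₀ (by positivity) hbk 2
    nlinarith [b_pos k, sq_nonneg (b k)]

lemma hasDerivAt_Vsum (n : ℕ) (t : ℝ) :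
    HasDerivAt (V n) (∑' k, F1 n k t) t := by
  rw [V_eq n]
  exact hasDerivAt_tsum (summable_aux 4) (hasDerivAt_F n) (fun k s => bound_F1 n k s)
    (summable_F0 n) t

lemma hasDerivAt_Vsum' (n : ℕ) (t : ℝ) :
    HasDerivAt (fun s => ∑' k, F1 n k s) (∑' k, F2 n k t) t := by
  have h0 : Summable fun k => F1 n k 0 := by
    apply summable_zero.congr
    intro k
    unfold F1
    simp
  exact hasDerivAt_tsum (summable_aux 12) (hasDerivAt_F1 n) (fun k s => bound_F2 n k s) h0 t

lemma iteratedDeriv_two (n : ℕ) (t : ℝ) :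
    iteratedDeriv 2 (V n) t = ∑' k, F2 n k t := by
  have hd : deriv (V n) = fun s => ∑' k, F1 n k s :=
    funext fun s => (hasDerivAt_Vsum n s).deriv
  rw [iteratedDeriv_succ, iteratedDeriv_one, hd]
  exact (hasDerivAt_Vsum' n t).deriv

end Vaux

theorem V_second_deriv_gt (n : ℕ) (t : ℝ) (ht : 0 < t) :
    0 < iteratedDeriv 2 (V n) t - iteratedDeriv 2 (V n) 0 := by
  rw [Vaux.iteratedDeriv_two n t, Vaux.iteratedDeriv_two n 0,
    ← Summable.tsum_sub (Vaux.summable_F2 n t) (Vaux.summable_F2 n 0)]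
  have hsum : Summable fun k => Vaux.F2 n k t - Vaux.F2 n k 0 :=
    (Vaux.summable_F2 n t).sub (Vaux.summable_F2 n 0)
  have hpos : ∀ k, 0 < Vaux.F2 n k t - Vaux.F2 n k 0 := by
    intro k
    have hD := Vaux.D_pos k t
    have hD0 := Vaux.D_pos k 0
    have hB := Vaux.bpow_pos n k
    have hb := Vaux.b_pos k
    have key : Vaux.F2 n k t - Vaux.F2 n k 0 =
        (4 * t ^ 6 + 12 * Vaux.b k ^ 2 * t ^ 4 + 24 * Vaux.b k ^ 4 * t ^ 2) /
          ((t ^ 2 + Vaux.b k ^ 2) ^ 3 * Vaux.b k ^ 4 * Vaux.b k ^ (2 * n)) := by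
      unfold Vaux.F2
      field_simp
      ring
    rw [key]
    positivity
  exact Summable.tsum_pos hsum (fun k => (hpos k).le) 0 (hpos 0)
end

section
/- For every integer n ≥ 0 and every t > 0, t/(e^t − 1) = 1 − t/2 + Σ_{k=1}^n (B_{2k}/(2k)!) t^{2k} + (−1)^n t^{2n+2} V_n(t), where B_{2k} are the Bernoulli numbers. -/
open Real

open Set intervalIntegral

local instance : Fact ((0:ℝ) < 1) := ⟨one_pos⟩

noncomputable def gfun (t : ℝ) : ℝ → ℂ := fun x => Complex.exp (t*x) - (Complex.exp t - 1)*x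

lemma gfun_cont (t : ℝ) : Continuous (gfun t) := by
  unfold gfun; fun_prop

lemma gfun_01 (t : ℝ) : gfun t 0 = gfun t 1 := by
  simp [gfun]

noncomputable def Gfun (t : ℝ) : C(AddCircle (1:ℝ), ℂ) :=
  ⟨AddCircle.liftIco (1:ℝ) 0 (gfun t),
    AddCircle.liftIco_zero_continuous (by simpa using gfun_01 t) ((gfun_cont t).continuousOn)⟩

lemma coeff_eq (t : ℝ) (n : ℤ) :
    fourierCoeff ⇑(Gfun t) n
      = ∫ x in (0:ℝ)..1, Complex.exp (-(2*π*Complex.I*n) * x) * gfun t x := by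
  rw [fourierCoeff_eq_intervalIntegral _ n 0, zero_add, div_one, one_smul]
  apply intervalIntegral.integral_congr
  intro x hx
  rw [uIcc_of_le (by norm_num : (0:ℝ) ≤ 1)] at hx
  have hG : (Gfun t) ↑x = gfun t x := by
    rcases eq_or_lt_of_le hx.2 with h1 | h1
    · have hco : ((x:ℝ) : AddCircle (1:ℝ)) = ((0:ℝ) : AddCircle (1:ℝ)) := by
        rw [← h1]
        simp [AddCircle.coe_period]
      show AddCircle.liftIco (1:ℝ) 0 (gfun t) ↑x = gfun t x
      rw [hco, AddCircle.liftIco_zero_coe_apply (by constructor <;> norm_num)]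
      rw [gfun_01, ← h1]
    · show AddCircle.liftIco (1:ℝ) 0 (gfun t) ↑x = gfun t x
      exact AddCircle.liftIco_zero_coe_apply ⟨hx.1, h1⟩
  show (fourier (-n)) ↑x • (Gfun t) ↑x = _
  rw [hG, fourier_coe_apply, smul_eq_mul]
  congr 1
  push_cast
  ring_nf

lemma int_exp01 (c : ℂ) (hc : c ≠ 0) :
    ∫ x in (0:ℝ)..1, Complex.exp (c*x) = (Complex.exp c - 1)/c := by
  rw [integral_exp_mul_complex hc]
  norm_num

lemma hasDerivAt_cexp_real (c : ℂ) (x : ℝ) :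
    HasDerivAt (fun y : ℝ => Complex.exp (c*y)) (c * Complex.exp (c*x)) x := by
  have h1 : HasDerivAt (fun y : ℂ => Complex.exp (c*y)) (c * Complex.exp (c*x)) (x:ℂ) := by
    simpa [mul_comm, Function.comp_def] using ((Complex.hasDerivAt_exp (c*(x:ℂ))).comp (x:ℂ)
      ((hasDerivAt_id (x:ℂ)).const_mul c))
  exact h1.comp_ofReal

lemma int_x_exp01 (c : ℂ) (hc : c ≠ 0) (hec : Complex.exp c = 1) :
    ∫ x in (0:ℝ)..1, (x:ℂ) * Complex.exp (c*x) = 1/c := by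
  have hu : ∀ x ∈ uIcc (0:ℝ) 1, HasDerivAt (fun y : ℝ => (y:ℂ)) 1 x := by
    intro x _
    simpa using (hasDerivAt_id (x:ℂ)).comp_ofReal
  have hv : ∀ x ∈ uIcc (0:ℝ) 1,
      HasDerivAt (fun y : ℝ => Complex.exp (c*y)/c) (Complex.exp (c*x)) x := by
    intro x _
    simpa [mul_div_cancel_left₀ _ hc] using (hasDerivAt_cexp_real c x).div_const c
  have h := intervalIntegral.integral_mul_deriv_eq_deriv_mul hu hv
    (continuous_const.intervalIntegrable 0 1)
    ((Complex.continuous_exp.comp (by fun_prop)).intervalIntegrable 0 1)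
  simp only [Complex.ofReal_one, Complex.ofReal_zero, one_mul, zero_mul, mul_one, mul_zero] at h
  rw [h]
  rw [intervalIntegral.integral_div, int_exp01 c hc, hec]
  simp

lemma two_pi_I_ne (z : ℂ) (hz : z ≠ 0) : 2*(π:ℂ)*Complex.I*z ≠ 0 := by
  simp [Real.pi_ne_zero, Complex.I_ne_zero, hz, Complex.ofReal_ne_zero]

lemma sub_two_pi_I_ne {t : ℝ} (ht : t ≠ 0) (n : ℤ) : (t:ℂ) - 2*π*Complex.I*n ≠ 0 := by
  intro h
  have := congrArg Complex.re h
  simp at this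
  exact ht this

lemma exp_neg_two_pi_I (n : ℤ) : Complex.exp (-(2*π*Complex.I*n)) = 1 := by
  have := Complex.exp_int_mul_two_pi_mul_I (-n)
  rw [← this]
  congr 1
  push_cast
  ring

lemma coeff_ne_zero {t : ℝ} (ht : 0 < t) (n : ℤ) (hn : n ≠ 0) :
    fourierCoeff ⇑(Gfun t) n
      = (Complex.exp t - 1) * t / (((t:ℂ) - 2*π*Complex.I*n) * (2*π*Complex.I*n)) := by
  have hnC : (n:ℂ) ≠ 0 := Int.cast_ne_zero.mpr hn
  have hc2 : 2*(π:ℂ)*Complex.I*n ≠ 0 := two_pi_I_ne _ hnC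
  have hc1 : (t:ℂ) - 2*π*Complex.I*n ≠ 0 := sub_two_pi_I_ne ht.ne' n
  rw [coeff_eq]
  have heq : ∀ x : ℝ, Complex.exp (-(2*π*Complex.I*n) * x) * gfun t x
      = Complex.exp (((t:ℂ) - 2*π*Complex.I*n) * x)
        - (Complex.exp t - 1) * ((x:ℂ) * Complex.exp ((-(2*π*Complex.I*n)) * x)) := by
    intro x
    unfold gfun
    rw [mul_sub, ← Complex.exp_add]
    ring_nf
  rw [intervalIntegral.integral_congr (fun x _ => heq x)]
  rw [intervalIntegral.integral_sub
    ((by fun_prop : Continuous fun x : ℝ =>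
      Complex.exp (((t:ℂ) - 2*π*Complex.I*n) * x)).intervalIntegrable 0 1)
    ((by fun_prop : Continuous fun x : ℝ => (Complex.exp (t:ℂ) - 1) *
      ((x:ℂ) * Complex.exp ((-(2*π*Complex.I*n)) * x))).intervalIntegrable 0 1)]
  rw [intervalIntegral.integral_const_mul, int_exp01 _ hc1,
    int_x_exp01 _ (neg_ne_zero.mpr hc2) (exp_neg_two_pi_I n)]
  rw [Complex.exp_sub]
  have he : Complex.exp (2*(π:ℂ)*Complex.I*(n:ℂ)) = 1 := by
    have h2 := Complex.exp_int_mul_two_pi_mul_I n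
    rw [← h2]
    congr 1
    ring
  rw [he]
  have hπ : (π:ℂ) ≠ 0 := Complex.ofReal_ne_zero.mpr Real.pi_ne_zero
  have hI : Complex.I ≠ 0 := Complex.I_ne_zero
  field_simp
  ring

lemma coeff_zero' {t : ℝ} (ht : 0 < t) :
    fourierCoeff ⇑(Gfun t) 0
      = (Complex.exp t - 1)/t - (Complex.exp t - 1)/2 := by
  have htC : (t:ℂ) ≠ 0 := Complex.ofReal_ne_zero.mpr ht.ne'
  rw [coeff_eq]
  have heq : ∀ x : ℝ, Complex.exp (-(2*π*Complex.I*(0:ℤ)) * x) * gfun t x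
      = Complex.exp ((t:ℂ) * x) - (Complex.exp t - 1) * ((x:ℝ):ℂ) := by
    intro x
    unfold gfun
    norm_num
  rw [intervalIntegral.integral_congr (fun x _ => heq x)]
  rw [intervalIntegral.integral_sub
    ((by fun_prop : Continuous fun x : ℝ =>
      Complex.exp ((t:ℂ) * x)).intervalIntegrable 0 1)
    ((by fun_prop : Continuous fun x : ℝ =>
      (Complex.exp (t:ℂ) - 1) * ((x:ℝ):ℂ)).intervalIntegrable 0 1)]
  rw [intervalIntegral.integral_const_mul, intervalIntegral.integral_ofReal,
    int_exp01 _ htC]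
  rw [integral_id]
  norm_num
  ring


lemma coeff_norm_bound {t : ℝ} (ht : 0 < t) (n : ℤ) (hn : n ≠ 0) :
    ‖fourierCoeff ⇑(Gfun t) n‖ ≤ ‖Complex.exp (t:ℂ) - 1‖ * t * (1/(n:ℝ)^2) := by
  have h1 : (1:ℝ) ≤ |(n:ℝ)| := by
    rw [← Int.cast_abs]
    exact_mod_cast Int.one_le_abs hn
  have hnR : ((n:ℝ)) ≠ 0 := Int.cast_ne_zero.mpr hn
  have hpi : (1:ℝ) ≤ 2*π := by nlinarith [Real.pi_gt_three]
  rw [coeff_ne_zero ht n hn, norm_div, norm_mul, norm_mul]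
  have hnt : ‖(t:ℂ)‖ = t := by
    rw [Complex.norm_real, Real.norm_eq_abs, abs_of_pos ht]
  have hcn : ‖2*(π:ℂ)*Complex.I*n‖ = 2*π*|(n:ℝ)| := by
    simp [norm_mul, Complex.norm_real, Complex.norm_I,
      abs_of_pos Real.pi_pos, Complex.norm_intCast]
  have hd1 : |(n:ℝ)| ≤ ‖(t:ℂ) - 2*π*Complex.I*n‖ := by
    have him := Complex.abs_im_le_norm ((t:ℂ) - 2*π*Complex.I*n)
    simp [Complex.sub_im, Complex.mul_im] at him
    refine le_trans ?_ him
    have h2 : |(2:ℝ)| = 2 := by norm_num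
    rw [abs_of_pos Real.pi_pos]
    nlinarith [abs_nonneg ((n:ℝ))]
  have hd2 : |(n:ℝ)| ≤ ‖2*(π:ℂ)*Complex.I*n‖ := by
    rw [hcn]
    nlinarith [abs_nonneg ((n:ℝ))]
  rw [hnt, mul_one_div]
  have hprod : (n:ℝ)^2 ≤ ‖(t:ℂ) - 2*π*Complex.I*n‖ * ‖2*(π:ℂ)*Complex.I*n‖ := by
    have := mul_le_mul hd1 hd2 (abs_nonneg _) (norm_nonneg _)
    calc (n:ℝ)^2 = |(n:ℝ)| * |(n:ℝ)| := by rw [sq, ← abs_mul_abs_self]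
    _ ≤ _ := this
  exact div_le_div_of_nonneg_left (by positivity) (by positivity) hprod

lemma coeff_summable {t : ℝ} (ht : 0 < t) : Summable (fourierCoeff ⇑(Gfun t)) := by
  apply Summable.of_norm_bounded_eventually
    (g := fun n : ℤ => ‖Complex.exp (t:ℂ) - 1‖ * t * (1/(n:ℝ)^(2:ℕ)))
  · exact (Real.summable_one_div_int_pow.mpr one_lt_two).mul_left _
  · refine Filter.eventually_cofinite.mpr (Set.Finite.subset (Set.finite_singleton 0) ?_)
    intro n hn
    simp only [Set.mem_setOf_eq] at hn
    simp only [Set.mem_singleton_iff]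
    by_contra h0
    exact hn (coeff_norm_bound ht n h0)

lemma hasSum_int_coeff {t : ℝ} (ht : 0 < t) :
    HasSum (fun n : ℤ => fourierCoeff ⇑(Gfun t) n) 1 := by
  have h0 := has_pointwise_sum_fourier_series_of_summable (coeff_summable ht) (0 : AddCircle (1:ℝ))
  have hG0 : (Gfun t) 0 = 1 := by
    have h1 : (Gfun t) ((0:ℝ) : AddCircle (1:ℝ)) = gfun t 0 := by
      show AddCircle.liftIco (1:ℝ) 0 (gfun t) ((0:ℝ) : AddCircle (1:ℝ)) = gfun t 0
      exact AddCircle.liftIco_zero_coe_apply (by simp)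
    have h2 : ((0:ℝ) : AddCircle (1:ℝ)) = (0 : AddCircle (1:ℝ)) := rfl
    rw [h2] at h1
    rw [h1]
    simp [gfun]
  rw [hG0] at h0
  convert h0 using 2 with i
  rw [fourier_eval_zero, smul_eq_mul, mul_one]

lemma pair_aux (A T c D : ℂ) (h1 : T - c ≠ 0) (h2 : T + c ≠ 0) (hc : c ≠ 0)
    (hD : (T - c) * (T + c) = D) :
    A / ((T - c) * c) + A / ((T - -c) * -c) = 2 * A / D := by
  rw [← hD]
  rw [sub_neg_eq_add]
  field_simp
  ring

lemma hasSum_pair {t : ℝ} (ht : 0 < t) :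
    HasSum (fun k : ℕ => (Real.exp t - 1) * t * (2/(t^2+4*π^2*((k:ℝ)+1)^2)))
      (1 - ((Real.exp t - 1)/t - (Real.exp t - 1)/2)) := by
  set c : ℤ → ℂ := fourierCoeff ⇑(Gfun t) with hcdef
  have h := (hasSum_int_coeff ht).nat_add_neg
  have hval : (1:ℂ) + c 0 = (1 - c 0) + ∑ i ∈ Finset.range 1, (c i + c (-i)) := by
    rw [Finset.sum_range_one]
    simp only [Nat.cast_zero, neg_zero]
    ring
  have hshift : HasSum (fun n : ℕ => c ((n:ℤ)+1) + c (-((n:ℤ)+1))) (1 - c 0) := by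
    have h2 := (hasSum_nat_add_iff (f := fun n : ℕ => c n + c (-n)) 1).mpr (hval ▸ h)
    push_cast at h2
    exact h2
  have hterm : ∀ n : ℕ, c ((n:ℤ)+1) + c (-((n:ℤ)+1))
      = (((Real.exp t - 1) * t * (2/(t^2+4*π^2*((n:ℝ)+1)^2)) : ℝ) : ℂ) := by
    intro n
    have hm : ((n:ℤ)+1) ≠ 0 := by omega
    have hm' : -((n:ℤ)+1) ≠ 0 := by omega
    rw [hcdef, coeff_ne_zero ht _ hm, coeff_ne_zero ht _ hm']
    have hπ : (π:ℂ) ≠ 0 := Complex.ofReal_ne_zero.mpr Real.pi_ne_zero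
    have hI : Complex.I ≠ 0 := Complex.I_ne_zero
    have htC : (t:ℂ) ≠ 0 := Complex.ofReal_ne_zero.mpr ht.ne'
    have h1 : (t:ℂ) - 2*π*Complex.I*((n:ℂ)+1) ≠ 0 := by
      intro hh
      have := congrArg Complex.re hh
      simp at this
      exact ht.ne' this
    have h2 : (t:ℂ) + 2*π*Complex.I*((n:ℂ)+1) ≠ 0 := by
      intro hh
      have := congrArg Complex.re hh
      simp at this
      exact ht.ne' this
    have hn1 : ((n:ℂ)+1) ≠ 0 := by
      intro hh
      have := congrArg Complex.re hh
      simp at this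
      linarith [Nat.cast_nonneg (α := ℝ) n]
    have hc3 : 2*(π:ℂ)*Complex.I*((n:ℂ)+1) ≠ 0 := two_pi_I_ne _ hn1
    have hkey : ((t:ℂ) - 2*π*Complex.I*((n:ℂ)+1)) * ((t:ℂ) + 2*π*Complex.I*((n:ℂ)+1))
        = (t:ℂ)^2 + 4*π^2*((n:ℂ)+1)^2 := by
      linear_combination (-(4:ℂ)*(π:ℂ)^2*((n:ℂ)+1)^2) * Complex.I_sq
    have e1 : ((((n:ℤ)+1) : ℤ) : ℂ) = ((n:ℂ)+1) := by push_cast; ring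
    have e2 : (((-((n:ℤ)+1)) : ℤ) : ℂ) = -((n:ℂ)+1) := by push_cast; ring
    rw [e1, e2]
    rw [show 2*(π:ℂ)*Complex.I*(-((n:ℂ)+1)) = -(2*(π:ℂ)*Complex.I*((n:ℂ)+1)) from by ring]
    rw [pair_aux ((Complex.exp (t:ℂ) - 1) * (t:ℂ)) _ _ _ h1 h2 hc3 hkey]
    have hD : ((t:ℂ)^2 + 4*π^2*((n:ℂ)+1)^2) ≠ 0 := by rw [← hkey]; exact mul_ne_zero h1 h2
    push_cast
    ring
  have hOf : HasSum (fun n : ℕ =>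
      (((Real.exp t - 1) * t * (2/(t^2+4*π^2*((n:ℝ)+1)^2)) : ℝ) : ℂ))
      ((1 - ((Real.exp t - 1)/t - (Real.exp t - 1)/2) : ℝ) : ℂ) := by
    have hc0 : (1:ℂ) - c 0 = ((1 - ((Real.exp t - 1)/t - (Real.exp t - 1)/2) : ℝ) : ℂ) := by
      rw [hcdef, coeff_zero' ht]
      push_cast
      ring
    rw [← hc0]
    simp only [hterm] at hshift
    exact hshift
  exact Complex.hasSum_ofReal.mp hOf

lemma hasSum_base {t : ℝ} (ht : 0 < t) :
    HasSum (fun k : ℕ => 2/(t^2+4*π^2*((k:ℝ)+1)^2))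
      ((1 - ((Real.exp t - 1)/t - (Real.exp t - 1)/2)) / ((Real.exp t - 1) * t)) := by
  have hE : 0 < Real.exp t - 1 := by
    have h1 : 1 < Real.exp t := by rw [Real.one_lt_exp_iff]; exact ht
    linarith
  have h := (hasSum_pair ht).div_const ((Real.exp t - 1) * t)
  have heq : ∀ k : ℕ, (Real.exp t - 1) * t * (2/(t^2+4*π^2*((k:ℝ)+1)^2))
      / ((Real.exp t - 1) * t) = 2/(t^2+4*π^2*((k:ℝ)+1)^2) := by
    intro k
    have hD : (0:ℝ) < t^2+4*π^2*((k:ℝ)+1)^2 := by positivity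
    field_simp
  simp only [heq] at h
  exact h

lemma one_le_two_pi_k (k : ℕ) : (1:ℝ) ≤ 2 * π * ((k:ℝ) + 1) := by
  have h1 : (0:ℝ) ≤ (k:ℝ) := Nat.cast_nonneg k
  nlinarith [Real.pi_gt_three]

lemma summable_V {t : ℝ} (ht : 0 < t) (n : ℕ) :
    Summable (fun k : ℕ =>
      2 / ((t ^ 2 + 4 * π ^ 2 * (k + 1 : ℝ) ^ 2) * (2 * π * (k + 1 : ℝ)) ^ (2 * n))) := by
  have hbase : Summable (fun k : ℕ => 2/(t^2+4*π^2*((k:ℝ)+1)^2)) :=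
    (hasSum_base ht).summable
  refine Summable.of_nonneg_of_le (fun k => by positivity) (fun k => ?_) hbase
  have hD : (0:ℝ) < t^2+4*π^2*((k:ℝ)+1)^2 := by positivity
  have hP : (1:ℝ) ≤ (2 * π * ((k:ℝ) + 1)) ^ (2*n) := one_le_pow₀ (one_le_two_pi_k k)
  exact div_le_div_of_nonneg_left (by norm_num) hD (le_mul_of_one_le_right hD.le hP)

lemma hasSum_V {t : ℝ} (ht : 0 < t) (n : ℕ) :
    HasSum (fun k : ℕ =>
      2 / ((t ^ 2 + 4 * π ^ 2 * (k + 1 : ℝ) ^ 2) * (2 * π * (k + 1 : ℝ)) ^ (2 * n)))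
      (V n t) :=
  (summable_V ht n).hasSum

lemma hasSum_zeta' (n : ℕ) :
    HasSum (fun k : ℕ => 2/(2*π*((k:ℝ)+1))^(2*(n+1)))
      ((-1:ℝ)^n * (bernoulli (2*(n+1)) : ℝ) / ((2*(n+1)).factorial : ℝ)) := by
  have h := hasSum_zeta_nat (k := n+1) (Nat.succ_ne_zero n)
  set Z := (-1 : ℝ) ^ (n+1+1) * 2 ^ (2*(n+1) - 1) * π ^ (2*(n+1)) *
        (bernoulli (2*(n+1)) : ℝ) / ((2*(n+1)).factorial : ℝ) with hZ
  have hs : HasSum (fun m : ℕ => 1/((m:ℝ))^(2*(n+1)))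
      (Z + ∑ i ∈ Finset.range 1, 1/((i:ℝ))^(2*(n+1))) := by
    have hz0 : ∑ i ∈ Finset.range 1, 1/((i:ℝ))^(2*(n+1)) = 0 := by simp
    rw [hz0, add_zero]
    exact h
  have h0' := (hasSum_nat_add_iff 1).mpr hs
  have h0 : HasSum (fun m : ℕ => 1/((m:ℝ)+1)^(2*(n+1))) Z := by
    convert h0' using 2 with m
    · rfl
    push_cast
    ring
  have h1 := h0.mul_left (2/(2*π)^(2*(n+1)))
  have hpi : (0:ℝ) < π := Real.pi_pos
  have hfac : ((2*(n+1)).factorial : ℝ) ≠ 0 := Nat.cast_ne_zero.mpr (2*(n+1)).factorial_ne_zero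
  have hterm : ∀ k : ℕ, 2/(2*π)^(2*(n+1)) * (1/((k:ℝ)+1)^(2*(n+1)))
      = 2/(2*π*((k:ℝ)+1))^(2*(n+1)) := by
    intro k
    have hmp : (2*π*((k:ℝ)+1))^(2*(n+1)) = (2*π)^(2*(n+1)) * ((k:ℝ)+1)^(2*(n+1)) :=
      mul_pow _ _ _
    rw [hmp]
    have hk : (0:ℝ) < ((k:ℝ)+1) := by positivity
    field_simp
  have hval : 2/(2*π)^(2*(n+1)) * ((-1 : ℝ) ^ (n+1+1) * 2 ^ (2*(n+1) - 1) * π ^ (2*(n+1)) *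
        (bernoulli (2*(n+1)) : ℝ) / ((2*(n+1)).factorial : ℝ))
      = (-1:ℝ)^n * (bernoulli (2*(n+1)) : ℝ) / ((2*(n+1)).factorial : ℝ) := by
    have hp : (2:ℝ)^(2*(n+1)) = 2*(2:ℝ)^(2*(n+1)-1) := by
      rw [← pow_succ']
      congr 1
    have hsgn : (-1:ℝ) ^ (n+1+1) = (-1:ℝ)^n := by
      rw [pow_succ, pow_succ]
      simp
    rw [mul_pow, hsgn, hp]
    have h2p : (0:ℝ) < (2:ℝ)^(2*(n+1)-1) := by positivity
    field_simp
  rw [hval] at h1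
  simp only [hterm] at h1
  exact h1

lemma V_rec {t : ℝ} (ht : 0 < t) (n : ℕ) :
    V n t = (-1:ℝ)^n * (bernoulli (2*(n+1)) : ℝ) / ((2*(n+1)).factorial : ℝ)
      - t^2 * V (n+1) t := by
  have h := (hasSum_zeta' n).sub ((hasSum_V ht (n+1)).mul_left (t^2))
  have hpt : ∀ k : ℕ, 2/(2*π*((k:ℝ)+1))^(2*(n+1))
      - t^2 * (2 / ((t ^ 2 + 4 * π ^ 2 * ((k:ℝ) + 1) ^ 2) * (2 * π * ((k:ℝ) + 1)) ^ (2 * (n+1))))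
      = 2 / ((t ^ 2 + 4 * π ^ 2 * ((k:ℝ) + 1) ^ 2) * (2 * π * ((k:ℝ) + 1)) ^ (2 * n)) := by
    intro k
    have hD : (0:ℝ) < t^2+4*π^2*((k:ℝ)+1)^2 := by positivity
    have hPp : (0:ℝ) < 2*π*((k:ℝ)+1) := by positivity
    have he : 2*(n+1) = 2*n+2 := by ring
    rw [he, pow_add]
    have hsq : (2*π*((k:ℝ)+1))^2 = 4*π^2*((k:ℝ)+1)^2 := by ring
    rw [hsq]
    have hPn : (0:ℝ) < (2*π*((k:ℝ)+1))^(2*n) := by positivity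
    field_simp
    ring
  simp only [hpt] at h
  exact (hasSum_V ht n).unique h

theorem expansion_of_t_div_exp_sub_one (n : ℕ) (t : ℝ) (ht : 0 < t) :
    t / (Real.exp t - 1) =
      1 - t / 2 + ∑ k ∈ Finset.Icc 1 n, (bernoulli (2 * k) : ℝ) / ((2 * k).factorial : ℝ) * t ^ (2 * k)
        + (-1 : ℝ) ^ n * t ^ (2 * n + 2) * V n t := by
  have hE : 0 < Real.exp t - 1 := by
    have h1 : 1 < Real.exp t := by rw [Real.one_lt_exp_iff]; exact ht
    linarith
  induction n with
  | zero =>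
    have hV0 : V 0 t = (1 - ((Real.exp t - 1)/t - (Real.exp t - 1)/2)) / ((Real.exp t - 1) * t) := by
      refine (hasSum_V ht 0).unique ?_
      have h := hasSum_base ht
      simp only [mul_zero, pow_zero, mul_one]
      exact h
    rw [hV0]
    rw [Finset.Icc_eq_empty (by omega), Finset.sum_empty]
    field_simp
    ring
  | succ n ih =>
    rw [Finset.sum_Icc_succ_top (by omega : 1 ≤ n + 1)]
    rw [ih]
    have hrec := V_rec ht n
    rw [hrec]
    have e1 : (2*(n+1)) = 2*n+2 := by ring
    rw [e1]
    have hsq : ((-1:ℝ))^n * (-1)^n = 1 := by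
      rw [← pow_add, ← two_mul, pow_mul]
      norm_num
    linear_combination (t^(2*n+2) * ((bernoulli (2*n+2) : ℝ)/(((2*n+2).factorial : ℕ) : ℝ))) * hsq
end

section
/- For all integers k ≥ 0 and n ≥ k+1, the function x ↦ x^k ∫₀^∞ e^{−xt} t^{2n−1} V_n(t) dt is completely monotonic on (0,∞). (The function P_n(x) = (−1)^n ∫₀^∞ e^{−xt} t^{2n−1} V_n(t) dt is the remainder in the asymptotic expansion of the logarithm of the Barnes G-function, so (−1)^n P_n is completely monotonic of order k for n ≥ k+1.) -/
open Real MeasureTheory Set Filter Finset Topology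

noncomputable section BarnesAux

/-- coefficient of the polynomial `S_j`. -/
def Kc (q j b : ℕ) : ℝ := (q.choose b : ℝ) * ((q - 1 - b).choose (j - b) : ℝ)

/-- the polynomial `S_j(s) = ∑_b K_b c^b s^(q-b)`. -/
def Sp (q j : ℕ) (c s : ℝ) : ℝ := ∑ b ∈ range (j + 1), Kc q j b * c ^ b * s ^ (q - b)

/-- `j`-th derivative of `s ↦ s^q/(s+c)` is `j! Sp/(s+c)^(j+1)`. -/
def Wd (q j : ℕ) (c s : ℝ) : ℝ := (j.factorial : ℝ) * Sp q j c s / (s + c) ^ (j + 1)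

lemma Kc_nonneg (q j b : ℕ) : 0 ≤ Kc q j b :=
  mul_nonneg (Nat.cast_nonneg _) (Nat.cast_nonneg _)

lemma hasDerivAt_Sp (q j : ℕ) (c s : ℝ) :
    HasDerivAt (Sp q j c)
      (∑ b ∈ range (j + 1), Kc q j b * c ^ b * (((q - b : ℕ) : ℝ) * s ^ (q - b - 1))) s := by
  apply HasDerivAt.fun_sum
  intro b _
  simpa [mul_assoc] using (hasDerivAt_pow (q - b) s).const_mul (Kc q j b * c ^ b)

/-- the natural-number combinatorial identity. -/
lemma coeff_id_nat (q j b : ℕ) (hb : b ≤ j) (hj : j + 1 ≤ q) :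
    (q - b) * (q.choose b * (q - 1 - b).choose (j - b))
      + b * (q.choose b * (q - b).choose (j + 1 - b))
    = (j + 1) * (q.choose b * ((q - 1 - b).choose (j - b) + (q - 1 - b).choose (j + 1 - b))) := by
  have hpas : (q - b).choose (j + 1 - b)
      = (q - 1 - b).choose (j - b) + (q - 1 - b).choose (j + 1 - b) := by
    have h1 : q - b = (q - 1 - b) + 1 := by omega
    have h2 : j + 1 - b = (j - b) + 1 := by omega
    rw [h1, h2, Nat.choose_succ_succ]
  have hsr : (q - 1 - b).choose ((j - b) + 1) * ((j - b) + 1)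
      = (q - 1 - b).choose (j - b) * (q - 1 - b - (j - b)) := Nat.choose_succ_right_eq _ _
  have h3 : q - 1 - b - (j - b) = q - 1 - j := by omega
  have h4 : (j - b) + 1 = j + 1 - b := by omega
  rw [h3, h4] at hsr
  set C := q.choose b
  set A := (q - 1 - b).choose (j - b)
  set Cc := (q - 1 - b).choose (j + 1 - b)
  rw [hpas]
  have hq : q - b + b = q := by omega
  have hqsplit : q = (j + 1) + (q - 1 - j) := by omega
  have h5 : j + 1 - b + b = j + 1 := by omega
  calc (q - b) * (C * A) + b * (C * (A + Cc))
      = (q - b + b) * (C * A) + b * (C * Cc) := by ring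
    _ = ((j + 1) + (q - 1 - j)) * (C * A) + b * (C * Cc) := by rw [hq, ← hqsplit]
    _ = (j + 1) * (C * A) + C * (A * (q - 1 - j)) + b * (C * Cc) := by ring
    _ = (j + 1) * (C * A) + C * (Cc * (j + 1 - b)) + b * (C * Cc) := by rw [← hsr]
    _ = (j + 1) * (C * A) + (j + 1 - b + b) * (C * Cc) := by ring
    _ = (j + 1) * (C * (A + Cc)) := by rw [h5]; ring

/-- the key identity making the derivative recurrence work. -/
lemma key_id (q j : ℕ) (hj : j + 1 ≤ q) (c s : ℝ) :
    (∑ b ∈ range (j + 1), Kc q j b * c ^ b * (((q - b : ℕ) : ℝ) * s ^ (q - b - 1))) * (s + c)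
      - ((j : ℝ) + 1) * Sp q j c s = ((j : ℝ) + 1) * Sp q (j + 1) c s := by
  set T : ℕ → ℝ := fun i =>
    (i : ℝ) * (q.choose i : ℝ) * ((q - i).choose (j + 1 - i) : ℝ) * c ^ i * s ^ (q - i) with hT
  have expand : (∑ b ∈ range (j + 1),
        Kc q j b * c ^ b * (((q - b : ℕ) : ℝ) * s ^ (q - b - 1))) * (s + c)
      = (∑ b ∈ range (j + 1), ((q - b : ℕ) : ℝ) * (Kc q j b * c ^ b * s ^ (q - b)))
        + ∑ b ∈ range (j + 1), T (b + 1) := by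
    rw [Finset.sum_mul, ← Finset.sum_add_distrib]
    refine Finset.sum_congr rfl fun b hb => ?_
    have hb' : b ≤ j := Nat.lt_succ_iff.mp (Finset.mem_range.mp hb)
    have e1 : s ^ (q - b - 1) * s = s ^ (q - b) := by
      rw [← pow_succ]
      congr 1
      omega
    have e2 : ((b : ℝ) + 1) * (q.choose (b + 1) : ℝ) = ((q - b : ℕ) : ℝ) * (q.choose b : ℝ) := by
      have h := Nat.choose_succ_right_eq q b
      have hc : ((q.choose (b + 1) * (b + 1) : ℕ) : ℝ) = ((q.choose b * (q - b) : ℕ) : ℝ) := by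
        rw [h]
      simp only [Nat.cast_mul, Nat.cast_add, Nat.cast_one] at hc
      linarith
    have e3 : q - (b + 1) = q - b - 1 := by omega
    have e4 : j + 1 - (b + 1) = j - b := by omega
    have e5 : q - 1 - b = q - b - 1 := by omega
    rw [hT]
    simp only [e3, e4, Nat.cast_add, Nat.cast_one]
    rw [Kc, e5, e2]
    rw [← e1]
    ring
  rw [expand]
  have hT0 : T 0 = 0 := by simp [hT]
  have hshift : ∑ b ∈ range (j + 1), T (b + 1) = ∑ b ∈ range (j + 2), T b := by
    rw [Finset.sum_range_succ' T (j + 1), hT0, add_zero]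
  rw [hshift, Finset.sum_range_succ T (j + 1)]
  have hSpj : ((j : ℝ) + 1) * Sp q j c s
      = ∑ b ∈ range (j + 1), ((j : ℝ) + 1) * (Kc q j b * c ^ b * s ^ (q - b)) := by
    rw [Sp, Finset.mul_sum]
  have hSp1 : ((j : ℝ) + 1) * Sp q (j + 1) c s
      = (∑ b ∈ range (j + 1), ((j : ℝ) + 1) * (Kc q (j + 1) b * c ^ b * s ^ (q - b)))
        + ((j : ℝ) + 1) * (Kc q (j + 1) (j + 1) * c ^ (j + 1) * s ^ (q - (j + 1))) := by
    rw [Sp, Finset.sum_range_succ, mul_add, Finset.mul_sum]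
  rw [hSpj, hSp1]
  have htop : T (j + 1) = ((j : ℝ) + 1) * (Kc q (j + 1) (j + 1) * c ^ (j + 1) * s ^ (q - (j + 1))) := by
    rw [hT, Kc]
    have h1 : j + 1 - (j + 1) = 0 := by omega
    simp only [h1, Nat.choose_zero_right, Nat.cast_one, Nat.cast_add]
    ring
  have hmain : ∀ b ∈ range (j + 1),
      ((q - b : ℕ) : ℝ) * (Kc q j b * c ^ b * s ^ (q - b)) + T b
          - ((j : ℝ) + 1) * (Kc q j b * c ^ b * s ^ (q - b))
        = ((j : ℝ) + 1) * (Kc q (j + 1) b * c ^ b * s ^ (q - b)) := by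
    intro b hb
    have hb' : b ≤ j := Nat.lt_succ_iff.mp (Finset.mem_range.mp hb)
    have h := coeff_id_nat q j b hb' hj
    have hc : (((q - b) * (q.choose b * (q - 1 - b).choose (j - b))
        + b * (q.choose b * (q - b).choose (j + 1 - b)) : ℕ) : ℝ)
        = (((j + 1) * (q.choose b * ((q - 1 - b).choose (j - b)
            + (q - 1 - b).choose (j + 1 - b))) : ℕ) : ℝ) := by rw [h]
    simp only [Nat.cast_mul, Nat.cast_add, Nat.cast_one] at hc
    rw [hT, Kc, Kc]
    linear_combination (c ^ b * s ^ (q - b)) * hc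
  calc (∑ b ∈ range (j + 1), ((q - b : ℕ) : ℝ) * (Kc q j b * c ^ b * s ^ (q - b)))
        + ((∑ b ∈ range (j + 1), T b) + T (j + 1))
        - ∑ b ∈ range (j + 1), ((j : ℝ) + 1) * (Kc q j b * c ^ b * s ^ (q - b))
      = (∑ b ∈ range (j + 1),
          (((q - b : ℕ) : ℝ) * (Kc q j b * c ^ b * s ^ (q - b)) + T b
            - ((j : ℝ) + 1) * (Kc q j b * c ^ b * s ^ (q - b)))) + T (j + 1) := by
        rw [Finset.sum_sub_distrib, Finset.sum_add_distrib]
        ring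
    _ = (∑ b ∈ range (j + 1), ((j : ℝ) + 1) * (Kc q (j + 1) b * c ^ b * s ^ (q - b)))
        + ((j : ℝ) + 1) * (Kc q (j + 1) (j + 1) * c ^ (j + 1) * s ^ (q - (j + 1))) := by
        rw [Finset.sum_congr rfl hmain, htop]


lemma hasDerivAt_Wd (q j : ℕ) (hj : j + 1 ≤ q) {c : ℝ} (hc : 0 < c) {s : ℝ} (hs : 0 ≤ s) :
    HasDerivAt (Wd q j c) (Wd q (j + 1) c s) s := by
  have hsc : (0:ℝ) < s + c := by linarith
  have hsc' : s + c ≠ 0 := ne_of_gt hsc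
  have h1 : HasDerivAt (fun s => (j.factorial : ℝ) * Sp q j c s)
      ((j.factorial : ℝ) *
        ∑ b ∈ range (j + 1), Kc q j b * c ^ b * (((q - b : ℕ) : ℝ) * s ^ (q - b - 1))) s :=
    (hasDerivAt_Sp q j c s).const_mul _
  have h2 : HasDerivAt (fun s : ℝ => (s + c) ^ (j + 1))
      (((j : ℝ) + 1) * (s + c) ^ j) s := by
    have := ((hasDerivAt_id s).add_const c).fun_pow (j + 1)
    simpa using this
  have hd := h1.fun_div h2 (pow_ne_zero _ hsc')
  refine hd.congr_deriv ?_
  symm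
  rw [Wd]
  set D := ∑ b ∈ range (j + 1), Kc q j b * c ^ b * (((q - b : ℕ) : ℝ) * s ^ (q - b - 1)) with hD
  have key := key_id q j hj c s
  rw [div_eq_div_iff (pow_ne_zero _ hsc') (by positivity)]
  have hfac : ((j + 1).factorial : ℝ) = ((j : ℝ) + 1) * (j.factorial : ℝ) := by
    rw [Nat.factorial_succ]; push_cast; ring
  rw [hfac]
  have hexp : ((s + c) ^ (j + 1)) ^ 2 = (s + c) ^ (j + 2) * (s + c) ^ j := by ring
  rw [hexp]
  have : ((j:ℝ) + 1) * Sp q (j + 1) c s = D * (s + c) - ((j : ℝ) + 1) * Sp q j c s := by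
    rw [key]
  calc ((j:ℝ) + 1) * (j.factorial : ℝ) * Sp q (j+1) c s * ((s+c)^(j+2) * (s+c)^j)
      = (j.factorial : ℝ) * (((j:ℝ) + 1) * Sp q (j+1) c s) * ((s+c)^(j+2) * (s+c)^j) := by ring
    _ = (j.factorial : ℝ) * (D * (s + c) - ((j : ℝ) + 1) * Sp q j c s) * ((s+c)^(j+2) * (s+c)^j) := by rw [this]
    _ = ((j.factorial : ℝ) * D * (s + c) ^ (j + 1)
          - (j.factorial : ℝ) * Sp q j c s * (((j:ℝ) + 1) * (s + c) ^ j)) * (s + c) ^ (j + 2) := by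
        ring

/-- coefficients of the `m`-th derivative of `t ↦ t^(2q+1)/(t²+c)` in terms of `Wd`. -/
def al : ℕ → ℕ → ℕ
  | 0, j => if j = 0 then 1 else 0
  | m + 1, 0 => (1 - m) * al m 0
  | m + 1, j + 1 => (2 * (j + 1) + 1 - m) * al m (j + 1) + 2 * al m j

lemma al_eq_zero_of_lt : ∀ m j, m < j → al m j = 0 := by
  intro m
  induction m with
  | zero =>
    intro j hj
    have : j ≠ 0 := by omega
    simp [al, this]
  | succ m ih =>
    intro j hj
    match j, hj with
    | j + 1, hj =>
      rw [al, ih j (by omega), ih (j + 1) (by omega)]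
      simp

lemma al_eq_zero_of_big : ∀ m j, 2 * j + 2 ≤ m → al m j = 0 := by
  intro m
  induction m with
  | zero => intro j hj; exact absurd hj (by omega)
  | succ m ih =>
    intro j hj
    match j with
    | 0 =>
      rw [al]
      have h1 : 1 - m = 0 := by omega
      rw [h1]
      simp
    | j + 1 =>
      rw [al, ih j (by omega)]
      rcases Nat.lt_or_ge m (2 * (j + 1) + 2) with h | h
      · have h2 : 2 * (j + 1) + 1 - m = 0 := by omega
        rw [h2]
        simp
      · rw [ih (j + 1) h]
        simp

/-- `m`-th derivative of `t ↦ t^(2q+1)/(t²+c)`. -/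
def Gt (q : ℕ) (c : ℝ) (m : ℕ) (t : ℝ) : ℝ :=
  ∑ j ∈ range (m + 1), (al m j : ℝ) * t ^ (2 * j + 1 - m) * Wd q j c (t ^ 2)

lemma hasDerivAt_Gt (q m : ℕ) (hm : m + 1 ≤ q) {c : ℝ} (hc : 0 < c) (t : ℝ) :
    HasDerivAt (Gt q c m) (Gt q c (m + 1) t) t := by
  have hterm : ∀ j ∈ range (m + 1),
      HasDerivAt (fun t : ℝ => (al m j : ℝ) * t ^ (2 * j + 1 - m) * Wd q j c (t ^ 2))
        ((al m j : ℝ) * (((2 * j + 1 - m : ℕ) : ℝ) * t ^ (2 * j - m) * Wd q j c (t ^ 2)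
          + t ^ (2 * j + 1 - m) * (Wd q (j + 1) c (t ^ 2) * (2 * t)))) t := by
    intro j hj
    have hjq : j + 1 ≤ q := by
      have := Finset.mem_range.mp hj; omega
    have hWd : HasDerivAt (Wd q j c) (Wd q (j + 1) c (t ^ 2)) (t ^ 2) :=
      hasDerivAt_Wd q j hjq hc (sq_nonneg t)
    have h2 : HasDerivAt (fun y : ℝ => y ^ 2) (2 * t) t := by
      have := hasDerivAt_pow 2 t
      norm_num at this
      exact this
    have hW : HasDerivAt (fun t : ℝ => Wd q j c (t ^ 2)) (Wd q (j + 1) c (t ^ 2) * (2 * t)) t := by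
      have := HasDerivAt.comp (h := fun y : ℝ => y ^ 2) (x := t) hWd h2
      exact this
    have hP : HasDerivAt (fun t : ℝ => t ^ (2 * j + 1 - m))
        (((2 * j + 1 - m : ℕ) : ℝ) * t ^ (2 * j + 1 - m - 1)) t := hasDerivAt_pow _ t
    have hee : 2 * j + 1 - m - 1 = 2 * j - m := by omega
    rw [hee] at hP
    have := (hP.fun_mul hW).const_mul (al m j : ℝ)
    simpa [mul_assoc] using this
  have hsum := HasDerivAt.fun_sum hterm
  have hGt : Gt q c m = fun t : ℝ =>
      ∑ j ∈ range (m + 1), (al m j : ℝ) * t ^ (2 * j + 1 - m) * Wd q j c (t ^ 2) := rfl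
  rw [hGt]
  refine hsum.congr_deriv ?_
  symm
  set G : ℕ → ℝ := fun i => 2 * (if i = 0 then (0:ℝ) else (al m (i - 1) : ℝ))
      * t ^ (2 * i - m) * Wd q i c (t ^ 2) with hG
  have hsplit : ∀ j ∈ range (m + 1),
      (al m j : ℝ) * (((2 * j + 1 - m : ℕ) : ℝ) * t ^ (2 * j - m) * Wd q j c (t ^ 2)
        + t ^ (2 * j + 1 - m) * (Wd q (j + 1) c (t ^ 2) * (2 * t)))
      = (al m j : ℝ) * ((2 * j + 1 - m : ℕ) : ℝ) * t ^ (2 * j - m) * Wd q j c (t ^ 2)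
        + G (j + 1) := by
    intro j hj
    rw [hG]
    simp only [Nat.add_sub_cancel, if_neg (Nat.succ_ne_zero j)]
    rcases Nat.eq_zero_or_pos (al m j) with h0 | hpos
    · rw [h0]; simp
    · have hmj : m ≤ 2 * j + 1 := by
        by_contra hcon
        push_neg at hcon
        have := al_eq_zero_of_big m j (by omega)
        omega
      have he : 2 * (j + 1) - m = 2 * j + 1 - m + 1 := by omega
      rw [mul_add, he, pow_succ]
      ring
  rw [Finset.sum_congr rfl hsplit, Finset.sum_add_distrib]
  have hshift : ∑ j ∈ range (m + 1), G (j + 1) = ∑ j ∈ range (m + 2), G j := by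
    rw [Finset.sum_range_succ' G (m + 1)]
    simp [hG]
  rw [hshift]
  have hext : ∑ j ∈ range (m + 2),
        (al m j : ℝ) * ((2 * j + 1 - m : ℕ) : ℝ) * t ^ (2 * j - m) * Wd q j c (t ^ 2)
      = ∑ j ∈ range (m + 1),
        (al m j : ℝ) * ((2 * j + 1 - m : ℕ) : ℝ) * t ^ (2 * j - m) * Wd q j c (t ^ 2) := by
    rw [Finset.sum_range_succ, al_eq_zero_of_lt m (m + 1) (by omega)]
    simp
  rw [← hext, ← Finset.sum_add_distrib, Gt]
  refine Finset.sum_congr rfl fun j hj => ?_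
  have hee : 2 * j + 1 - (m + 1) = 2 * j - m := by omega
  rw [hee, hG]
  match j with
  | 0 =>
    simp only [if_pos rfl]
    rw [al]
    have h01 : 2 * 0 + 1 - m = 1 - m := by omega
    rw [h01]
    push_cast [Nat.cast_mul]
    ring
  | j + 1 =>
    simp only [if_neg (Nat.succ_ne_zero j), Nat.add_sub_cancel]
    rw [al]
    push_cast [Nat.cast_mul, Nat.cast_add]
    ring

lemma Sp_nonneg (q j : ℕ) {c s : ℝ} (hc : 0 ≤ c) (hs : 0 ≤ s) : 0 ≤ Sp q j c s :=
  Finset.sum_nonneg fun b _ =>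
    mul_nonneg (mul_nonneg (Kc_nonneg q j b) (pow_nonneg hc b)) (pow_nonneg hs _)

lemma Wd_nonneg (q j : ℕ) {c s : ℝ} (hc : 0 < c) (hs : 0 ≤ s) : 0 ≤ Wd q j c s := by
  apply div_nonneg
  · exact mul_nonneg (Nat.cast_nonneg _) (Sp_nonneg q j hc.le hs)
  · positivity

lemma Gt_nonneg (q m : ℕ) {c t : ℝ} (hc : 0 < c) (ht : 0 ≤ t) : 0 ≤ Gt q c m t :=
  Finset.sum_nonneg fun j _ =>
    mul_nonneg (mul_nonneg (Nat.cast_nonneg _) (pow_nonneg ht _))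
      (Wd_nonneg q j hc (sq_nonneg t))

lemma Sp_zero (q j : ℕ) (hjq : j < q) (c : ℝ) : Sp q j c 0 = 0 := by
  apply Finset.sum_eq_zero
  intro b hb
  have hb' : b ≤ j := Nat.lt_succ_iff.mp (Finset.mem_range.mp hb)
  have : q - b ≠ 0 := by omega
  rw [zero_pow this, mul_zero]

lemma Gt_zero (q m : ℕ) (hm : m ≤ q) {c : ℝ} (hc : 0 < c) : Gt q c m 0 = 0 := by
  apply Finset.sum_eq_zero
  intro j hj
  rcases Nat.eq_zero_or_pos (al m j) with h0 | hpos
  · rw [h0]; simp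
  · have hmj : m ≤ 2 * j + 1 := by
      by_contra hcon
      push_neg at hcon
      have := al_eq_zero_of_big m j (by omega)
      omega
    rcases Nat.lt_or_ge m (2 * j + 1) with h | h
    · have : 2 * j + 1 - m ≠ 0 := by omega
      rw [zero_pow this, mul_zero, zero_mul]
    · have hmeq : m = 2 * j + 1 := by omega
      have hjq : j < q := by omega
      have hWd0 : Wd q j c ((0:ℝ) ^ 2) = 0 := by
        rw [Wd]
        rw [show ((0:ℝ)^2) = 0 by norm_num, Sp_zero q j hjq c]
        simp
      rw [hWd0, mul_zero]

/-- sum of the coefficients of `Sp`. -/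
def CK (q j : ℕ) : ℝ := ∑ b ∈ range (j + 1), Kc q j b

lemma CK_nonneg (q j : ℕ) : 0 ≤ CK q j := Finset.sum_nonneg fun b _ => Kc_nonneg q j b

lemma Sp_le (q j : ℕ) (hj : j ≤ q) {c s : ℝ} (hc : 0 ≤ c) (hs : 0 ≤ s) :
    Sp q j c s ≤ CK q j * (s + c) ^ q := by
  rw [CK, Finset.sum_mul]
  apply Finset.sum_le_sum
  intro b hb
  have hb' : b ≤ j := Nat.lt_succ_iff.mp (Finset.mem_range.mp hb)
  have h1 : c ^ b ≤ (s + c) ^ b := pow_le_pow_left₀ hc (by linarith) b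
  have h2 : s ^ (q - b) ≤ (s + c) ^ (q - b) := pow_le_pow_left₀ hs (by linarith) _
  have h3 : (s + c) ^ b * (s + c) ^ (q - b) = (s + c) ^ q := by
    rw [← pow_add]
    congr 1
    omega
  calc Kc q j b * c ^ b * s ^ (q - b)
      ≤ Kc q j b * (s + c) ^ b * (s + c) ^ (q - b) := by
        apply mul_le_mul
        · exact mul_le_mul_of_nonneg_left h1 (Kc_nonneg q j b)
        · exact h2
        · exact pow_nonneg hs _
        · exact mul_nonneg (Kc_nonneg q j b) (pow_nonneg (by linarith) b)
    _ = Kc q j b * (s + c) ^ q := by rw [mul_assoc, h3]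

lemma Wd_le (q j : ℕ) (hj : j ≤ q) {c s : ℝ} (hc : 1 ≤ c) (hs : 0 ≤ s) :
    Wd q j c s ≤ (j.factorial : ℝ) * CK q j * (s + c) ^ q / c := by
  have hc0 : (0:ℝ) < c := by linarith
  have hsc : (0:ℝ) < s + c := by linarith
  have hden : c ≤ (s + c) ^ (j + 1) := by
    calc c = c ^ 1 := (pow_one c).symm
      _ ≤ c ^ (j + 1) := pow_le_pow_right₀ hc (by omega)
      _ ≤ (s + c) ^ (j + 1) := pow_le_pow_left₀ hc0.le (by linarith) _
  have hnum : (j.factorial : ℝ) * Sp q j c s ≤ (j.factorial : ℝ) * CK q j * (s + c) ^ q := by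
    rw [mul_assoc]
    exact mul_le_mul_of_nonneg_left (Sp_le q j hj hc0.le hs) (Nat.cast_nonneg _)
  have hR : (0:ℝ) ≤ (j.factorial : ℝ) * CK q j * (s + c) ^ q :=
    mul_nonneg (mul_nonneg (Nat.cast_nonneg _) (CK_nonneg q j)) (pow_nonneg hsc.le _)
  exact div_le_div₀ hR hnum hc0 hden

/-- coefficient for the `Gt` bound. -/
def CB (q m : ℕ) : ℝ := ∑ j ∈ range (m + 1), (al m j : ℝ) * (j.factorial : ℝ) * CK q j

lemma CB_nonneg (q m : ℕ) : 0 ≤ CB q m :=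
  Finset.sum_nonneg fun j _ =>
    mul_nonneg (mul_nonneg (Nat.cast_nonneg _) (Nat.cast_nonneg _)) (CK_nonneg q j)

lemma Gt_le (q m : ℕ) (hm : m ≤ q) {c t : ℝ} (hc : 1 ≤ c) (ht : 0 ≤ t) :
    Gt q c m t ≤ CB q m * (1 + t) ^ (2 * m + 1 + 2 * q) * c ^ q / c := by
  have hc0 : (0:ℝ) < c := by linarith
  have h1t : (1:ℝ) ≤ 1 + t := by linarith
  have h1t0 : (0:ℝ) ≤ 1 + t := by linarith
  rw [CB, Finset.sum_mul, Finset.sum_mul, Finset.sum_div]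
  apply Finset.sum_le_sum
  intro j hj
  have hj' : j ≤ m := Nat.lt_succ_iff.mp (Finset.mem_range.mp hj)
  have hjq : j ≤ q := le_trans hj' hm
  -- t^(2j+1-m) ≤ (1+t)^(2m+1)
  have hpow : t ^ (2 * j + 1 - m) ≤ (1 + t) ^ (2 * m + 1) := by
    calc t ^ (2 * j + 1 - m) ≤ (1 + t) ^ (2 * j + 1 - m) :=
          pow_le_pow_left₀ ht (by linarith) _
      _ ≤ (1 + t) ^ (2 * m + 1) := pow_le_pow_right₀ h1t (by omega)
  -- (t² + c)^q ≤ c^q (1+t)^(2q)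
  have hsq : (t ^ 2 + c) ^ q ≤ c ^ q * (1 + t) ^ (2 * q) := by
    have h1 : t ^ 2 + c ≤ c * (1 + t) ^ 2 := by nlinarith [sq_nonneg t]
    calc (t ^ 2 + c) ^ q ≤ (c * (1 + t) ^ 2) ^ q :=
          pow_le_pow_left₀ (by positivity) h1 q
      _ = c ^ q * (1 + t) ^ (2 * q) := by rw [mul_pow, ← pow_mul, mul_comm 2 q]
  have hWd := Wd_le q j hjq hc (sq_nonneg t)
  have hWd0 := Wd_nonneg q j hc0 (sq_nonneg t)
  calc (al m j : ℝ) * t ^ (2 * j + 1 - m) * Wd q j c (t ^ 2)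
      ≤ (al m j : ℝ) * (1 + t) ^ (2 * m + 1)
          * ((j.factorial : ℝ) * CK q j * (t ^ 2 + c) ^ q / c) := by
        apply mul_le_mul
        · exact mul_le_mul_of_nonneg_left hpow (Nat.cast_nonneg _)
        · exact hWd
        · exact hWd0
        · exact mul_nonneg (Nat.cast_nonneg _) (pow_nonneg h1t0 _)
    _ ≤ (al m j : ℝ) * (1 + t) ^ (2 * m + 1)
          * ((j.factorial : ℝ) * CK q j * (c ^ q * (1 + t) ^ (2 * q)) / c) := by
        apply mul_le_mul_of_nonneg_left _ (mul_nonneg (Nat.cast_nonneg _) (pow_nonneg h1t0 _))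
        apply (div_le_div_iff_of_pos_right hc0).mpr
        exact mul_le_mul_of_nonneg_left hsq
          (mul_nonneg (Nat.cast_nonneg _) (CK_nonneg q j))
    _ = (al m j : ℝ) * (j.factorial : ℝ) * CK q j * (1 + t) ^ (2 * m + 1 + 2 * q) * c ^ q / c := by
        rw [pow_add]
        ring

lemma cont_Gt (q m : ℕ) {c : ℝ} (hc : 0 < c) : Continuous (fun t : ℝ => Gt q c m t) := by
  apply continuous_finset_sum
  intro j _
  have hden : ∀ t : ℝ, ((t:ℝ) ^ 2 + c) ^ (j + 1) ≠ 0 := fun t => by positivity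
  have hSp : Continuous (fun t : ℝ => Sp q j c (t ^ 2)) := by
    apply continuous_finset_sum
    intro b _
    exact continuous_const.mul ((continuous_pow 2).pow (q - b))
  have h1 : Continuous (fun t : ℝ => Wd q j c (t ^ 2)) :=
    (continuous_const.mul hSp).div
      (((continuous_pow 2).add continuous_const).pow (j + 1)) hden
  exact (continuous_const.mul (continuous_pow _)).mul h1

lemma integrable_exp_poly {x : ℝ} (hx : 0 < x) (p : ℕ) :
    IntegrableOn (fun t : ℝ => (1 + t) ^ p * Real.exp (-x * t)) (Ioi 0) := by
  set C : ℝ := (p.factorial : ℝ) * (2 / x) ^ p * Real.exp (x / 2) with hC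
  have hbound : ∀ t ∈ Ioi (0:ℝ), ‖(1 + t) ^ p * Real.exp (-x * t)‖ ≤ C * Real.exp (-(x/2) * t) := by
    intro t ht
    have ht' : (0:ℝ) < t := ht
    have h1t : (0:ℝ) ≤ 1 + t := by linarith
    rw [Real.norm_eq_abs, abs_of_nonneg (mul_nonneg (pow_nonneg h1t p) (Real.exp_pos _).le)]
    have hkey : (1 + t) ^ p ≤ (p.factorial : ℝ) * (2 / x) ^ p * Real.exp ((x/2) * (1 + t)) := by
      have h2 := Real.pow_div_factorial_le_exp (x := (x/2) * (1 + t)) (by positivity) p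
      have hfac : (0:ℝ) < (p.factorial : ℝ) := by positivity
      rw [div_le_iff₀ hfac] at h2
      have : ((x/2) * (1 + t)) ^ p = (x/2) ^ p * (1 + t) ^ p := mul_pow _ _ _
      rw [this] at h2
      have hxp : (0:ℝ) < (x/2) ^ p := by positivity
      calc (1 + t) ^ p = ((x/2) ^ p * (1 + t) ^ p) / (x/2) ^ p := by field_simp
        _ ≤ (Real.exp ((x/2) * (1 + t)) * (p.factorial : ℝ)) / (x/2) ^ p := by
            apply div_le_div_of_nonneg_right h2 hxp.le
        _ = (p.factorial : ℝ) * (2 / x) ^ p * Real.exp ((x/2) * (1 + t)) := by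
            rw [div_pow, div_pow]
            field_simp
    calc (1 + t) ^ p * Real.exp (-x * t)
        ≤ ((p.factorial : ℝ) * (2 / x) ^ p * Real.exp ((x/2) * (1 + t))) * Real.exp (-x * t) :=
          mul_le_mul_of_nonneg_right hkey (Real.exp_pos _).le
      _ = C * Real.exp (-(x/2) * t) := by
          rw [hC, mul_assoc, mul_assoc, ← Real.exp_add,
            show x / 2 * (1 + t) + -x * t = x / 2 + -(x / 2) * t from by ring, Real.exp_add]
          ring
  apply Integrable.mono' ((exp_neg_integrableOn_Ioi 0 (by positivity : (0:ℝ) < x/2)).const_mul C)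
  · exact (((continuous_const.add continuous_id).pow p).mul
      (Real.continuous_exp.comp (continuous_const.mul continuous_id))).aestronglyMeasurable
  · rw [ae_restrict_iff' measurableSet_Ioi]
    exact Filter.Eventually.of_forall hbound

lemma integrable_exp_mono {x : ℝ} (hx : 0 < x) {g : ℝ → ℝ}
    (hmeas : AEStronglyMeasurable g (volume.restrict (Ioi 0)))
    {C : ℝ} {p : ℕ} (hb : ∀ t ∈ Ioi (0:ℝ), |g t| ≤ C * (1 + t) ^ p) :
    IntegrableOn (fun t : ℝ => Real.exp (-x * t) * g t) (Ioi 0) := by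
  apply Integrable.mono' (((integrable_exp_poly hx p).const_mul C))
  · exact (Real.continuous_exp.comp (continuous_const.mul continuous_id)).aestronglyMeasurable.mul
      hmeas
  · rw [ae_restrict_iff' measurableSet_Ioi]
    apply Filter.Eventually.of_forall
    intro t ht
    have h1t : (0:ℝ) ≤ 1 + t := by
      have : (0:ℝ) < t := ht
      linarith
    rw [Real.norm_eq_abs, abs_mul, abs_of_nonneg (Real.exp_pos _).le]
    calc Real.exp (-x * t) * |g t| ≤ Real.exp (-x * t) * (C * (1 + t) ^ p) :=
          mul_le_mul_of_nonneg_left (hb t ht) (Real.exp_pos _).le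
      _ = C * ((1 + t) ^ p * Real.exp (-x * t)) := by ring

lemma tendsto_poly_exp {x : ℝ} (hx : 0 < x) (C : ℝ) (p : ℕ) :
    Tendsto (fun t : ℝ => C * (1 + t) ^ p * Real.exp (-x * t)) atTop (𝓝 0) := by
  have h1 : Tendsto (fun t : ℝ => x * (1 + t)) atTop atTop := by
    apply Tendsto.const_mul_atTop hx
    exact tendsto_atTop_add_const_left _ 1 tendsto_id
  have h2 := (tendsto_pow_mul_exp_neg_atTop_nhds_zero p).comp h1
  have h3 := h2.const_mul (C * Real.exp x / x ^ p)
  rw [mul_zero] at h3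
  apply h3.congr
  intro t
  simp only [Function.comp_apply]
  have hexp : Real.exp x * Real.exp (-(x * (1 + t))) = Real.exp (-(x * t)) := by
    rw [← Real.exp_add]
    congr 1
    ring
  have hxp : (x:ℝ) ^ p ≠ 0 := by positivity
  rw [mul_pow, show (-x) * t = -(x * t) from by ring, ← hexp]
  field_simp

lemma tendsto_exp_Gt (q m : ℕ) (hm : m ≤ q) {c : ℝ} (hc : 1 ≤ c) {x : ℝ} (hx : 0 < x) :
    Tendsto (fun t : ℝ => Real.exp (-x * t) * Gt q c m t) atTop (𝓝 0) := by
  have hc0 : (0:ℝ) < c := by linarith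
  apply squeeze_zero' (g := fun t => (CB q m * c ^ q / c) * (1 + t) ^ (2 * m + 1 + 2 * q)
      * Real.exp (-x * t))
  · filter_upwards [eventually_ge_atTop (0:ℝ)] with t ht
    exact mul_nonneg (Real.exp_pos _).le (Gt_nonneg q m hc0 ht)
  · filter_upwards [eventually_ge_atTop (0:ℝ)] with t ht
    have := Gt_le q m hm hc ht
    calc Real.exp (-x * t) * Gt q c m t
        ≤ Real.exp (-x * t) * (CB q m * (1 + t) ^ (2 * m + 1 + 2 * q) * c ^ q / c) :=
          mul_le_mul_of_nonneg_left this (Real.exp_pos _).le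
      _ = (CB q m * c ^ q / c) * (1 + t) ^ (2 * m + 1 + 2 * q) * Real.exp (-x * t) := by ring
  · exact tendsto_poly_exp hx _ _

lemma integrable_exp_Gt (q m : ℕ) (hm : m ≤ q) {c : ℝ} (hc : 1 ≤ c) {x : ℝ} (hx : 0 < x) :
    IntegrableOn (fun t : ℝ => Real.exp (-x * t) * Gt q c m t) (Ioi 0) := by
  have hc0 : (0:ℝ) < c := by linarith
  apply integrable_exp_mono hx (cont_Gt q m hc0).aestronglyMeasurable
    (C := CB q m * c ^ q / c) (p := 2 * m + 1 + 2 * q)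
  intro t ht
  have ht' : (0:ℝ) ≤ t := le_of_lt ht
  rw [abs_of_nonneg (Gt_nonneg q m hc0 ht')]
  calc Gt q c m t ≤ CB q m * (1 + t) ^ (2 * m + 1 + 2 * q) * c ^ q / c := Gt_le q m hm hc ht'
    _ = CB q m * c ^ q / c * (1 + t) ^ (2 * m + 1 + 2 * q) := by ring

lemma ibp_step (q m : ℕ) (hmq : m + 1 ≤ q) {c : ℝ} (hc : 1 ≤ c) {x : ℝ} (hx : 0 < x) :
    ∫ t in Ioi (0:ℝ), Real.exp (-x * t) * Gt q c (m + 1) t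
      = x * ∫ t in Ioi (0:ℝ), Real.exp (-x * t) * Gt q c m t := by
  have hc0 : (0:ℝ) < c := by linarith
  set F : ℝ → ℝ := fun t => Real.exp (-x * t) * Gt q c m t with hF
  have hderiv : ∀ t ∈ Ioi (0:ℝ), HasDerivAt F
      (Real.exp (-x * t) * Gt q c (m + 1) t - x * (Real.exp (-x * t) * Gt q c m t)) t := by
    intro t _
    have he : HasDerivAt (fun t : ℝ => Real.exp (-x * t)) (-x * Real.exp (-x * t)) t := by
      have h0 : HasDerivAt (fun t : ℝ => -x * t) (-x) t := by
        simpa using (hasDerivAt_id t).const_mul (-x)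
      simpa [mul_comm] using h0.exp
    have := he.fun_mul (hasDerivAt_Gt q m hmq hc0 t)
    refine this.congr_deriv ?_
    ring
  have hint1 := integrable_exp_Gt q m (by omega) hc hx
  have hint2 := integrable_exp_Gt q (m + 1) hmq hc hx
  have hcont : ContinuousWithinAt F (Ici 0) 0 :=
    ((Real.continuous_exp.comp (continuous_const.mul continuous_id)).mul
      (cont_Gt q m hc0)).continuousWithinAt
  have htend : Tendsto F atTop (𝓝 0) := tendsto_exp_Gt q m (by omega) hc hx
  have hf'int : IntegrableOn (fun t => Real.exp (-x * t) * Gt q c (m + 1) t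
      - x * (Real.exp (-x * t) * Gt q c m t)) (Ioi 0) := hint2.sub (hint1.const_mul x)
  have key := integral_Ioi_of_hasDerivAt_of_tendsto hcont hderiv hf'int htend
  have hF0 : F 0 = 0 := by
    rw [hF]
    simp [Gt_zero q m (by omega) hc0]
  rw [hF0, sub_zero] at key
  have hsplit := integral_sub hint2 (hint1.const_mul x)
  rw [key] at hsplit
  have : ∫ t in Ioi (0:ℝ), x * (Real.exp (-x * t) * Gt q c m t)
      = x * ∫ t in Ioi (0:ℝ), Real.exp (-x * t) * Gt q c m t := by
    exact integral_const_mul x _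
  linarith [hsplit, this.symm]

lemma ibp_chain (q k : ℕ) (hk : k ≤ q) {c : ℝ} (hc : 1 ≤ c) {x : ℝ} (hx : 0 < x) :
    ∫ t in Ioi (0:ℝ), Real.exp (-x * t) * Gt q c k t
      = x ^ k * ∫ t in Ioi (0:ℝ), Real.exp (-x * t) * Gt q c 0 t := by
  induction k with
  | zero => simp
  | succ k ih =>
    rw [ibp_step q k hk hc hx, ih (by omega), pow_succ]
    ring

section Laplace

variable {g : ℝ → ℝ} {C : ℝ} {p : ℕ}

lemma integrable_Fm (hmeas : AEStronglyMeasurable g (volume.restrict (Ioi 0)))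
    (hb : ∀ t ∈ Ioi (0:ℝ), |g t| ≤ C * (1 + t) ^ p) {x : ℝ} (hx : 0 < x) (m : ℕ) :
    IntegrableOn (fun t : ℝ => (-t) ^ m * (Real.exp (-x * t) * g t)) (Ioi 0) := by
  have hmeas' : AEStronglyMeasurable (fun t : ℝ => (-t) ^ m * g t) (volume.restrict (Ioi 0)) :=
    (continuous_neg.pow m).aestronglyMeasurable.mul hmeas
  have hb' : ∀ t ∈ Ioi (0:ℝ), |(-t) ^ m * g t| ≤ |C| * (1 + t) ^ (p + m) := by
    intro t ht
    have ht' : (0:ℝ) < t := ht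
    have h1t : (1:ℝ) ≤ 1 + t := by linarith
    rw [abs_mul, abs_pow, abs_neg, abs_of_nonneg ht'.le]
    calc t ^ m * |g t| ≤ (1 + t) ^ m * (C * (1 + t) ^ p) := by
          apply mul_le_mul (pow_le_pow_left₀ ht'.le (by linarith) m) (hb t ht) (abs_nonneg _)
            (pow_nonneg (by linarith) m)
      _ ≤ (1 + t) ^ m * (|C| * (1 + t) ^ p) := by
          apply mul_le_mul_of_nonneg_left _ (pow_nonneg (by linarith) m)
          exact mul_le_mul_of_nonneg_right (le_abs_self C) (pow_nonneg (by linarith) p)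
      _ = |C| * (1 + t) ^ (p + m) := by rw [pow_add]; ring
  have := integrable_exp_mono hx hmeas' (C := |C|) (p := p + m) hb'
  apply this.congr_fun _ measurableSet_Ioi
  intro t _
  ring

lemma hasDerivAt_Fm (hmeas : AEStronglyMeasurable g (volume.restrict (Ioi 0)))
    (hb : ∀ t ∈ Ioi (0:ℝ), |g t| ≤ C * (1 + t) ^ p) {x : ℝ} (hx : 0 < x) (m : ℕ) :
    HasDerivAt (fun z : ℝ => ∫ t in Ioi 0, (-t) ^ m * (Real.exp (-z * t) * g t))
      (∫ t in Ioi 0, (-t) ^ (m + 1) * (Real.exp (-x * t) * g t)) x := by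
  have hCnn : 0 ≤ C := by
    have := hb 1 (by norm_num)
    have h2 : (0:ℝ) ≤ C * (1 + 1) ^ p := le_trans (abs_nonneg _) this
    nlinarith [pow_pos (show (0:ℝ) < 1 + 1 by norm_num) p]
  have hmeasm : ∀ (z : ℝ) (m' : ℕ), AEStronglyMeasurable
      (fun t : ℝ => (-t) ^ m' * (Real.exp (-z * t) * g t)) (volume.restrict (Ioi 0)) := by
    intro z m'
    exact (continuous_neg.pow m').aestronglyMeasurable.mul
      ((Real.continuous_exp.comp (continuous_const.mul continuous_id)).aestronglyMeasurable.mul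
        hmeas)
  have hε : (0:ℝ) < x / 2 := by positivity
  have hres := hasDerivAt_integral_of_dominated_loc_of_deriv_le (μ := volume.restrict (Ioi 0))
    (F := fun z t => (-t) ^ m * (Real.exp (-z * t) * g t))
    (F' := fun z t => (-t) ^ (m + 1) * (Real.exp (-z * t) * g t))
    (x₀ := x)
    (bound := fun t => C * ((1 + t) ^ (p + (m + 1)) * Real.exp (-(x / 2) * t)))
    (Metric.ball_mem_nhds x hε)
    (Filter.Eventually.of_forall fun z => hmeasm z m)
    (integrable_Fm hmeas hb hx m)
    (hmeasm x (m + 1))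
    ?_ ?_ ?_
  · exact hres.2
  · -- bound
    rw [ae_restrict_iff' measurableSet_Ioi]
    apply Filter.Eventually.of_forall
    intro t ht z hz
    have ht' : (0:ℝ) < t := ht
    have h1t : (1:ℝ) ≤ 1 + t := by linarith
    have hz2 : x / 2 < z := by
      have := abs_lt.mp (mem_ball_iff_norm.mp hz)
      linarith [this.1]
    have hexp : Real.exp (-z * t) ≤ Real.exp (-(x / 2) * t) := by
      apply Real.exp_le_exp.mpr
      nlinarith
    rw [norm_mul, norm_pow, norm_neg, Real.norm_eq_abs, Real.norm_eq_abs,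
      abs_of_nonneg ht'.le, abs_mul, abs_of_nonneg (Real.exp_pos _).le]
    calc t ^ (m + 1) * (Real.exp (-z * t) * |g t|)
        ≤ (1 + t) ^ (m + 1) * (Real.exp (-(x / 2) * t) * (C * (1 + t) ^ p)) := by
          apply mul_le_mul (pow_le_pow_left₀ ht'.le (by linarith) _)
          · exact mul_le_mul hexp (hb t ht) (abs_nonneg _) (Real.exp_pos _).le
          · positivity
          · positivity
      _ = C * ((1 + t) ^ (p + (m + 1)) * Real.exp (-(x / 2) * t)) := by
          rw [pow_add]; ring
  · -- integrability of bound
    exact (integrable_exp_poly hε (p + (m + 1))).const_mul C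
  · -- differentiability in z
    rw [ae_restrict_iff' measurableSet_Ioi]
    apply Filter.Eventually.of_forall
    intro t _ z _
    have hd : HasDerivAt (fun z : ℝ => Real.exp (-z * t)) (Real.exp (-z * t) * (-1 * t)) z :=
      (((hasDerivAt_id z).neg.mul_const t)).exp
    have h1 := (hd.mul_const (g t)).const_mul ((-t : ℝ) ^ m)
    refine h1.congr_deriv ?_
    symm
    show (-t) ^ (m + 1) * (Real.exp (-z * t) * g t)
      = (-t) ^ m * (Real.exp (-z * t) * (-1 * t) * g t)
    rw [pow_succ]
    ring

lemma iterDeriv_laplace (hmeas : AEStronglyMeasurable g (volume.restrict (Ioi 0)))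
    (hb : ∀ t ∈ Ioi (0:ℝ), |g t| ≤ C * (1 + t) ^ p) (m : ℕ) :
    ∀ x : ℝ, 0 < x →
      iteratedDeriv m (fun z : ℝ => ∫ t in Ioi 0, Real.exp (-z * t) * g t) x
        = ∫ t in Ioi 0, (-t) ^ m * (Real.exp (-x * t) * g t) := by
  induction m with
  | zero =>
    intro x hx
    rw [iteratedDeriv_zero]
    simp
  | succ m ih =>
    intro x hx
    have hev : iteratedDeriv m (fun z : ℝ => ∫ t in Ioi 0, Real.exp (-z * t) * g t)
        =ᶠ[𝓝 x] fun z : ℝ => ∫ t in Ioi 0, (-t) ^ m * (Real.exp (-z * t) * g t) := by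
      filter_upwards [isOpen_Ioi.mem_nhds (show x ∈ Ioi (0:ℝ) from hx)] with z hz
      exact ih z hz
    rw [iteratedDeriv_succ, hev.deriv_eq, (hasDerivAt_Fm hmeas hb hx m).deriv]

lemma cm_laplace (hmeas : AEStronglyMeasurable g (volume.restrict (Ioi 0)))
    (hpos : ∀ t ∈ Ioi (0:ℝ), 0 ≤ g t)
    (hb : ∀ t ∈ Ioi (0:ℝ), g t ≤ C * (1 + t) ^ p) :
    CompletelyMonotonicOn (fun x : ℝ => ∫ t in Ioi 0, Real.exp (-x * t) * g t) := by
  have hb' : ∀ t ∈ Ioi (0:ℝ), |g t| ≤ C * (1 + t) ^ p := by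
    intro t ht
    rw [abs_of_nonneg (hpos t ht)]
    exact hb t ht
  constructor
  · intro m x hx
    have hev : iteratedDeriv m (fun z : ℝ => ∫ t in Ioi 0, Real.exp (-z * t) * g t)
        =ᶠ[𝓝 x] fun z : ℝ => ∫ t in Ioi 0, (-t) ^ m * (Real.exp (-z * t) * g t) := by
      filter_upwards [isOpen_Ioi.mem_nhds (show x ∈ Ioi (0:ℝ) from hx)] with z hz
      exact iterDeriv_laplace hmeas hb' m z hz
    rw [hev.differentiableAt_iff]
    exact (hasDerivAt_Fm hmeas hb' hx m).differentiableAt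
  · intro m x hx
    rw [iterDeriv_laplace hmeas hb' m x hx, ← integral_const_mul]
    apply setIntegral_nonneg measurableSet_Ioi
    intro t ht
    have ht' : (0:ℝ) < t := ht
    have heq : (-1:ℝ) ^ m * ((-t) ^ m * (Real.exp (-x * t) * g t))
        = t ^ m * (Real.exp (-x * t) * g t) := by
      rw [← mul_assoc, ← mul_pow, neg_one_mul, neg_neg]
    rw [heq]
    exact mul_nonneg (pow_nonneg ht'.le m)
      (mul_nonneg (Real.exp_pos _).le (hpos t ht))

end Laplace

/-- the sequence of pole parameters `4π²(i+1)²`. -/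
def cseq : ℕ → ℝ := fun i => 4 * π ^ 2 * ((i : ℝ) + 1) ^ 2

lemma cseq_pos (i : ℕ) : 0 < cseq i := by
  have := Real.pi_pos
  have : (0:ℝ) < ((i:ℝ) + 1) := by positivity
  unfold cseq
  positivity

lemma cseq_sq_le (i : ℕ) : ((i:ℝ) + 1) ^ 2 ≤ cseq i := by
  have hpi : (3:ℝ) < π := Real.pi_gt_three
  have h1 : (1:ℝ) ≤ ((i:ℝ) + 1) ^ 2 := by
    have : (1:ℝ) ≤ (i:ℝ) + 1 := by
      have := Nat.cast_nonneg (α := ℝ) i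
      linarith
    nlinarith
  have h4 : (1:ℝ) ≤ 4 * π ^ 2 := by nlinarith
  unfold cseq
  calc ((i:ℝ) + 1) ^ 2 = 1 * ((i:ℝ) + 1) ^ 2 := (one_mul _).symm
    _ ≤ 4 * π ^ 2 * ((i:ℝ) + 1) ^ 2 :=
        mul_le_mul_of_nonneg_right h4 (sq_nonneg _)

lemma cseq_ge_one (i : ℕ) : 1 ≤ cseq i := by
  have h1 : (1:ℝ) ≤ ((i:ℝ) + 1) ^ 2 := by
    have : (1:ℝ) ≤ (i:ℝ) + 1 := by
      have := Nat.cast_nonneg (α := ℝ) i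
      linarith
    nlinarith
  linarith [cseq_sq_le i]

lemma summable_inv_sq : Summable (fun i : ℕ => 1 / ((i:ℝ) + 1) ^ 2) := by
  have h := Real.summable_one_div_nat_pow.mpr (show 1 < 2 by norm_num)
  have h2 := (summable_nat_add_iff 1).mpr h
  apply h2.congr
  intro i
  push_cast
  ring

lemma Gt_zero_eq (q : ℕ) (c t : ℝ) : Gt q c 0 t = t * ((t ^ 2) ^ q / (t ^ 2 + c)) := by
  simp [Gt, Wd, Sp, Kc, al]

lemma D_le (q m n : ℕ) (hm : m ≤ q) (hn : n = q + 1) (i : ℕ) {t : ℝ} (ht : 0 ≤ t) :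
    (2 / cseq i ^ n) * Gt q (cseq i) m t
      ≤ 2 * CB q m * (1 + t) ^ (2 * m + 1 + 2 * q) * (1 / ((i:ℝ) + 1) ^ 2) := by
  set c := cseq i with hc
  have hc1 : 1 ≤ c := cseq_ge_one i
  have hc0 : (0:ℝ) < c := cseq_pos i
  have hGt := Gt_le q m hm hc1 ht
  have hnn : (0:ℝ) ≤ 2 / c ^ n := by positivity
  have step1 : (2 / c ^ n) * Gt q c m t
      ≤ (2 / c ^ n) * (CB q m * (1 + t) ^ (2 * m + 1 + 2 * q) * c ^ q / c) :=
    mul_le_mul_of_nonneg_left hGt hnn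
  have hcn : c ^ n = c ^ q * c := by rw [hn, pow_succ]
  have step2 : (2 / c ^ n) * (CB q m * (1 + t) ^ (2 * m + 1 + 2 * q) * c ^ q / c)
      = 2 * CB q m * (1 + t) ^ (2 * m + 1 + 2 * q) * (1 / c ^ 2) := by
    rw [hcn]
    field_simp
  have hc2 : ((i:ℝ) + 1) ^ 2 ≤ c ^ 2 := by
    calc ((i:ℝ) + 1) ^ 2 ≤ c := cseq_sq_le i
      _ = c * 1 := (mul_one c).symm
      _ ≤ c * c := by nlinarith
      _ = c ^ 2 := (sq c).symm
  have step3 : 1 / c ^ 2 ≤ 1 / ((i:ℝ) + 1) ^ 2 := by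
    apply one_div_le_one_div_of_le
    · positivity
    · exact hc2
  calc (2 / c ^ n) * Gt q c m t
      ≤ 2 * CB q m * (1 + t) ^ (2 * m + 1 + 2 * q) * (1 / c ^ 2) := by
        rw [← step2]; exact step1
    _ ≤ 2 * CB q m * (1 + t) ^ (2 * m + 1 + 2 * q) * (1 / ((i:ℝ) + 1) ^ 2) := by
        apply mul_le_mul_of_nonneg_left step3
        have := CB_nonneg q m
        positivity

lemma D_nonneg (q m n : ℕ) (i : ℕ) {t : ℝ} (ht : 0 ≤ t) :
    0 ≤ (2 / cseq i ^ n) * Gt q (cseq i) m t := by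
  have hc0 := cseq_pos i
  exact mul_nonneg (by positivity) (Gt_nonneg q m hc0 ht)

end BarnesAux
theorem barnesG_remainder_completelyMonotonic (k n : ℕ) (hkn : k + 1 ≤ n) :
    CompletelyMonotonicOn (fun x : ℝ =>
      x ^ k * ∫ t in Set.Ioi (0 : ℝ), Real.exp (-x * t) * (t ^ (2 * n - 1) * V n t)) := by
  obtain ⟨q, hn⟩ : ∃ q, n = q + 1 := ⟨n - 1, by omega⟩
  have hkq : k ≤ q := by omega
  have h2n1 : 2 * n - 1 = 2 * q + 1 := by omega
  set H : ℝ → ℝ :=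
    fun t => (∑' i, ENNReal.ofReal ((2 / cseq i ^ n) * Gt q (cseq i) k t)).toReal with hHdef
  -- measurability of H
  have hHmeas : Measurable H := by
    apply ENNReal.measurable_toReal.comp
    apply Measurable.ennreal_tsum
    intro i
    exact ENNReal.measurable_ofReal.comp
      (continuous_const.mul (cont_Gt q k (cseq_pos i))).measurable
  -- pointwise value of H
  have hsummable : ∀ t : ℝ, 0 ≤ t →
      Summable (fun i => (2 / cseq i ^ n) * Gt q (cseq i) k t) := by
    intro t ht
    apply Summable.of_nonneg_of_le (fun i => D_nonneg q k n i ht)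
      (fun i => D_le q k n hkq hn i ht)
    exact summable_inv_sq.mul_left _
  have hHval : ∀ t : ℝ, 0 ≤ t → H t = ∑' i, (2 / cseq i ^ n) * Gt q (cseq i) k t := by
    intro t ht
    simp only [hHdef]
    rw [← ENNReal.ofReal_tsum_of_nonneg (fun i => D_nonneg q k n i ht) (hsummable t ht)]
    exact ENNReal.toReal_ofReal (tsum_nonneg (fun i => D_nonneg q k n i ht))
  have hHpos : ∀ t ∈ Ioi (0:ℝ), 0 ≤ H t := fun t _ => ENNReal.toReal_nonneg
  -- bound on H
  set S : ℝ := ∑' i : ℕ, 1 / ((i:ℝ) + 1) ^ 2 with hS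
  have hHb : ∀ t ∈ Ioi (0:ℝ), H t ≤ (2 * CB q k * S) * (1 + t) ^ (2 * k + 1 + 2 * q) := by
    intro t ht
    have ht' : (0:ℝ) ≤ t := (le_of_lt ht)
    rw [hHval t ht']
    calc ∑' i, (2 / cseq i ^ n) * Gt q (cseq i) k t
        ≤ ∑' i : ℕ, 2 * CB q k * (1 + t) ^ (2 * k + 1 + 2 * q) * (1 / ((i:ℝ) + 1) ^ 2) :=
          Summable.tsum_le_tsum (fun i => D_le q k n hkq hn i ht') (hsummable t ht')
            (summable_inv_sq.mul_left _)
      _ = 2 * CB q k * (1 + t) ^ (2 * k + 1 + 2 * q) * S := tsum_mul_left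
      _ = (2 * CB q k * S) * (1 + t) ^ (2 * k + 1 + 2 * q) := by ring
  -- the V identity
  have hpowc : ∀ i : ℕ, (2 * π * ((i:ℝ) + 1)) ^ (2 * n) = cseq i ^ n := by
    intro i
    rw [pow_mul]
    congr 1
    unfold cseq
    ring
  have hVt : ∀ t : ℝ, t ^ (2 * n - 1) * V n t
      = ∑' i, (2 / cseq i ^ n) * Gt q (cseq i) 0 t := by
    intro t
    have hV : V n t = ∑' i, 2 / ((t ^ 2 + cseq i) * cseq i ^ n) := by
      unfold V
      apply tsum_congr
      intro i
      rw [hpowc i]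
      rfl
    rw [hV, ← tsum_mul_left]
    apply tsum_congr
    intro i
    have hc0 := cseq_pos i
    have hden : t ^ 2 + cseq i ≠ 0 := by positivity
    have hcn : cseq i ^ n ≠ 0 := by positivity
    rw [Gt_zero_eq, h2n1]
    have ht21 : t ^ (2 * q + 1) = t * (t ^ 2) ^ q := by
      rw [pow_succ', pow_mul]
    rw [ht21]
    field_simp
  -- main integral identity for x > 0
  have hfeq : ∀ x : ℝ, 0 < x →
      x ^ k * (∫ t in Ioi (0:ℝ), Real.exp (-x * t) * (t ^ (2 * n - 1) * V n t))
        = ∫ t in Ioi (0:ℝ), Real.exp (-x * t) * H t := by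
    intro x hx
    have hint : ∀ m : ℕ, m ≤ q → ∀ i : ℕ,
        Integrable (fun t : ℝ => Real.exp (-x * t) * ((2 / cseq i ^ n) * Gt q (cseq i) m t))
          (volume.restrict (Ioi 0)) := by
      intro m hm i
      have h0 : IntegrableOn
          (fun t : ℝ => (2 / cseq i ^ n) * (Real.exp (-x * t) * Gt q (cseq i) m t)) (Ioi 0) :=
        (integrable_exp_Gt q m hm (cseq_ge_one i) hx).const_mul (2 / cseq i ^ n)
      apply h0.congr_fun _ measurableSet_Ioi
      intro t _
      ring
    have hnormint : ∀ m : ℕ, m ≤ q → ∀ i : ℕ,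
        (∫ t in Ioi (0:ℝ), ‖Real.exp (-x * t) * ((2 / cseq i ^ n) * Gt q (cseq i) m t)‖)
          ≤ (2 * CB q m
              * ∫ t in Ioi (0:ℝ), (1 + t) ^ (2 * m + 1 + 2 * q) * Real.exp (-x * t))
            * (1 / ((i:ℝ) + 1) ^ 2) := by
      intro m hm i
      have hmono : (∫ t in Ioi (0:ℝ), ‖Real.exp (-x * t)
            * ((2 / cseq i ^ n) * Gt q (cseq i) m t)‖)
          ≤ ∫ t in Ioi (0:ℝ), (2 * CB q m * (1 / ((i:ℝ) + 1) ^ 2))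
              * ((1 + t) ^ (2 * m + 1 + 2 * q) * Real.exp (-x * t)) := by
        apply setIntegral_mono_on ((hint m hm i).norm) _ measurableSet_Ioi
        · intro t ht
          have ht' : (0:ℝ) ≤ t := le_of_lt ht
          have hD0 := D_nonneg q m n i ht'
          have hDle := D_le q m n hm hn i ht'
          rw [Real.norm_eq_abs, abs_mul, abs_of_nonneg (Real.exp_pos _).le, abs_of_nonneg hD0]
          calc Real.exp (-x * t) * ((2 / cseq i ^ n) * Gt q (cseq i) m t)
              ≤ Real.exp (-x * t)
                  * (2 * CB q m * (1 + t) ^ (2 * m + 1 + 2 * q) * (1 / ((i:ℝ) + 1) ^ 2)) :=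
                mul_le_mul_of_nonneg_left hDle (Real.exp_pos _).le
            _ = (2 * CB q m * (1 / ((i:ℝ) + 1) ^ 2))
                  * ((1 + t) ^ (2 * m + 1 + 2 * q) * Real.exp (-x * t)) := by ring
        · exact (integrable_exp_poly hx _).const_mul _
      rw [integral_const_mul] at hmono
      calc (∫ t in Ioi (0:ℝ), ‖Real.exp (-x * t) * ((2 / cseq i ^ n) * Gt q (cseq i) m t)‖)
          ≤ (2 * CB q m * (1 / ((i:ℝ) + 1) ^ 2))
              * ∫ t in Ioi (0:ℝ), (1 + t) ^ (2 * m + 1 + 2 * q) * Real.exp (-x * t) := hmono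
        _ = (2 * CB q m
              * ∫ t in Ioi (0:ℝ), (1 + t) ^ (2 * m + 1 + 2 * q) * Real.exp (-x * t))
            * (1 / ((i:ℝ) + 1) ^ 2) := by ring
    have hsumnorm : ∀ m : ℕ, m ≤ q →
        Summable (fun i : ℕ => ∫ t in Ioi (0:ℝ),
          ‖Real.exp (-x * t) * ((2 / cseq i ^ n) * Gt q (cseq i) m t)‖) := by
      intro m hm
      apply Summable.of_nonneg_of_le
        (fun i => integral_nonneg (fun t => norm_nonneg _))
        (fun i => hnormint m hm i)
      exact summable_inv_sq.mul_left _
    -- E1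
    have hE1 : (∫ t in Ioi (0:ℝ), Real.exp (-x * t) * (t ^ (2 * n - 1) * V n t))
        = ∑' i, ∫ t in Ioi (0:ℝ),
            Real.exp (-x * t) * ((2 / cseq i ^ n) * Gt q (cseq i) 0 t) := by
      have hinteq : (fun t : ℝ => Real.exp (-x * t) * (t ^ (2 * n - 1) * V n t))
          = fun t : ℝ => ∑' i, Real.exp (-x * t) * ((2 / cseq i ^ n) * Gt q (cseq i) 0 t) := by
        funext t
        rw [hVt t, ← tsum_mul_left]
      rw [hinteq]
      exact (integral_tsum_of_summable_integral_norm (hint 0 (by omega)) (hsumnorm 0 (by omega))).symm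
    -- E2
    have hE2 : ∀ i : ℕ,
        (∫ t in Ioi (0:ℝ), Real.exp (-x * t) * ((2 / cseq i ^ n) * Gt q (cseq i) k t))
          = x ^ k * ∫ t in Ioi (0:ℝ),
              Real.exp (-x * t) * ((2 / cseq i ^ n) * Gt q (cseq i) 0 t) := by
      intro i
      have hshape : ∀ m : ℕ,
          (∫ t in Ioi (0:ℝ), Real.exp (-x * t) * ((2 / cseq i ^ n) * Gt q (cseq i) m t))
            = (2 / cseq i ^ n) * ∫ t in Ioi (0:ℝ), Real.exp (-x * t) * Gt q (cseq i) m t := by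
        intro m
        rw [← integral_const_mul]
        apply setIntegral_congr_fun measurableSet_Ioi
        intro t _
        ring
      rw [hshape k, hshape 0, ibp_chain q k hkq (cseq_ge_one i) hx]
      ring
    -- E3
    have hE3 : (∑' i, ∫ t in Ioi (0:ℝ),
          Real.exp (-x * t) * ((2 / cseq i ^ n) * Gt q (cseq i) k t))
        = ∫ t in Ioi (0:ℝ), Real.exp (-x * t) * H t := by
      rw [integral_tsum_of_summable_integral_norm (hint k hkq) (hsumnorm k hkq)]
      apply setIntegral_congr_fun measurableSet_Ioi
      intro t ht
      show (∑' i, Real.exp (-x * t) * ((2 / cseq i ^ n) * Gt q (cseq i) k t))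
        = Real.exp (-x * t) * H t
      rw [hHval t (le_of_lt ht), ← tsum_mul_left]
    rw [hE1, ← hE3, ← tsum_mul_left]
    exact tsum_congr fun i => (hE2 i).symm
  -- conclude via cm_laplace
  have hCM := cm_laplace (g := H) hHmeas.aestronglyMeasurable hHpos hHb
  constructor
  · intro m x hx
    have hev : (fun x : ℝ =>
          x ^ k * ∫ t in Ioi (0:ℝ), Real.exp (-x * t) * (t ^ (2 * n - 1) * V n t))
        =ᶠ[𝓝 x] fun x : ℝ => ∫ t in Ioi (0:ℝ), Real.exp (-x * t) * H t := by
      filter_upwards [isOpen_Ioi.mem_nhds (show x ∈ Ioi (0:ℝ) from hx)] with y hy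
      exact hfeq y hy
    have hevd : iteratedDeriv m (fun x : ℝ =>
          x ^ k * ∫ t in Ioi (0:ℝ), Real.exp (-x * t) * (t ^ (2 * n - 1) * V n t))
        =ᶠ[𝓝 x] iteratedDeriv m (fun x : ℝ => ∫ t in Ioi (0:ℝ), Real.exp (-x * t) * H t) := by
      filter_upwards [isOpen_Ioi.mem_nhds (show x ∈ Ioi (0:ℝ) from hx)] with y hy
      have hev' : (fun x : ℝ =>
            x ^ k * ∫ t in Ioi (0:ℝ), Real.exp (-x * t) * (t ^ (2 * n - 1) * V n t))
          =ᶠ[𝓝 y] fun x : ℝ => ∫ t in Ioi (0:ℝ), Real.exp (-x * t) * H t := by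
        filter_upwards [isOpen_Ioi.mem_nhds (show y ∈ Ioi (0:ℝ) from hy)] with z hz
        exact hfeq z hz
      exact hev'.iteratedDeriv_eq m
    rw [hevd.differentiableAt_iff]
    exact hCM.1 m x hx
  · intro m x hx
    have hev' : (fun x : ℝ =>
          x ^ k * ∫ t in Ioi (0:ℝ), Real.exp (-x * t) * (t ^ (2 * n - 1) * V n t))
        =ᶠ[𝓝 x] fun x : ℝ => ∫ t in Ioi (0:ℝ), Real.exp (-x * t) * H t := by
      filter_upwards [isOpen_Ioi.mem_nhds (show x ∈ Ioi (0:ℝ) from hx)] with z hz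
      exact hfeq z hz
    rw [hev'.iteratedDeriv_eq m]
    exact hCM.2 m x hx
end

section
/- For every integer n ≥ 0, the function h_n(x) = n·x^n/(1+x) + x^n/(1+x)² satisfies h_n^{(n)}(x) = (n+1)!/(1+x)^{n+2} for all x > 0, h_n^{(k)}(0) = 0 for every integer k with 0 ≤ k ≤ n−1, and h_n^{(k)}(x) > 0 for every integer k with 0 ≤ k ≤ n and every x > 0. -/
open Polynomial Set Filter

/-- `h_n(x) = n·xⁿ/(1+x) + xⁿ/(1+x)²`. -/
noncomputable def h (n : ℕ) (x : ℝ) : ℝ :=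
  n * x ^ n / (1 + x) + x ^ n / (1 + x) ^ 2

noncomputable def Qp (n : ℕ) : Polynomial ℝ :=
  ∑ j ∈ Finset.range (n+1), Polynomial.C ((-1:ℝ)^(n-j)) * Polynomial.X ^ j

lemma Qp_eval_mul (n : ℕ) (x : ℝ) :
    (Qp n).eval x * (x + 1) = x^(n+1) - (-1:ℝ)^(n+1) := by
  have hg := geom_sum₂_mul x (-1 : ℝ) (n+1)
  have hQ : (Qp n).eval x = ∑ i ∈ Finset.range (n+1), x ^ i * (-1:ℝ) ^ (n + 1 - 1 - i) := by
    rw [Qp, Polynomial.eval_finset_sum]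
    apply Finset.sum_congr rfl
    intro i hi
    simp [mul_comm]
  rw [hQ]
  simpa [sub_neg_eq_add] using hg

lemma Qp_coeff (n m : ℕ) (hm : m ≤ n) : (Qp n).coeff m = (-1:ℝ)^(n-m) := by
  rw [Qp, Polynomial.finset_sum_coeff, Finset.sum_eq_single m]
  · rw [Polynomial.coeff_C_mul, Polynomial.coeff_X_pow, if_pos rfl, mul_one]
  · intro b _ hb
    simp only [Polynomial.coeff_C_mul, Polynomial.coeff_X_pow, if_neg (Ne.symm hb), mul_zero]
  · intro hmem
    exact absurd (Finset.mem_range.mpr (by omega)) hmem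

lemma Qp_natDegree (n : ℕ) : (Qp n).natDegree ≤ n := by
  apply Polynomial.natDegree_sum_le_of_forall_le
  intro j hj
  calc (Polynomial.C ((-1:ℝ)^(n-j)) * Polynomial.X ^ j).natDegree ≤ j :=
        Polynomial.natDegree_C_mul_X_pow_le _ _
    _ ≤ n := Nat.lt_succ_iff.mp (Finset.mem_range.mp hj)

noncomputable def phi (n k : ℕ) (x : ℝ) : ℝ :=
  (Polynomial.derivative^[k+1] (Qp n)).eval x
    + (-1:ℝ)^(n+k) * ((k+1).factorial : ℝ) / (1+x)^(k+2)

lemma hasDerivAt_phi (n k : ℕ) {x : ℝ} (hx : (1:ℝ) + x ≠ 0) :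
    HasDerivAt (phi n k) (phi n (k+1) x) x := by
  have hpoly : HasDerivAt (fun y => (Polynomial.derivative^[k+1] (Qp n)).eval y)
      ((Polynomial.derivative^[k+2] (Qp n)).eval x) x := by
    have := (Polynomial.derivative^[k+1] (Qp n)).hasDerivAt x
    rwa [← Function.iterate_succ_apply' Polynomial.derivative (k+1)] at this
  have h1 : HasDerivAt (fun y : ℝ => 1 + y) 1 x := (hasDerivAt_id x).const_add 1
  have hv : HasDerivAt (fun y : ℝ => (1+y)^(k+2)) (((k:ℝ)+2) * (1+x)^(k+1)) x := by
    simpa using h1.fun_pow (k+2)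
  have hr : HasDerivAt (fun y : ℝ => (-1:ℝ)^(n+k) * ((k+1).factorial : ℝ) / (1+y)^(k+2))
      ((-1:ℝ)^(n+(k+1)) * ((k+2).factorial : ℝ) / (1+x)^(k+2+1)) x := by
    have hd := (hasDerivAt_const x ((-1:ℝ)^(n+k) * ((k+1).factorial : ℝ))).fun_div hv
        (pow_ne_zero _ hx)
    refine hd.congr_deriv ?_
    rw [Nat.factorial_succ (k+1)]
    field_simp
    push_cast
    ring
  exact hpoly.fun_add hr

lemma h_eq_phi_zero (n : ℕ) {x : ℝ} (hx : (-1:ℝ) < x) : h n x = phi n 0 x := by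
  have hx0 : (1:ℝ) + x ≠ 0 := by linarith
  set G : ℝ → ℝ := fun y => (Qp n).eval y + (-1:ℝ)^(n+1) * (1+y)⁻¹ with hGdef
  have hFG : Set.EqOn (fun y : ℝ => y^(n+1)/(1+y)) G (Set.Ioi (-1:ℝ)) := by
    intro y hy
    have hy0 : (1:ℝ) + y ≠ 0 := by
      have : (-1:ℝ) < y := hy
      linarith
    have hm := Qp_eval_mul n y
    simp only [hGdef]
    field_simp
    linarith [hm]
  have hF : HasDerivAt (fun y : ℝ => y^(n+1)/(1+y)) (h n x) x := by
    have hu : HasDerivAt (fun y:ℝ => y^(n+1)) (((n:ℝ)+1)*x^n) x := by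
      simpa using hasDerivAt_pow (n+1) x
    have hv : HasDerivAt (fun y:ℝ => 1+y) 1 x := (hasDerivAt_id x).const_add 1
    have hd := hu.fun_div hv hx0
    refine hd.congr_deriv ?_
    simp only [h]
    field_simp
    ring
  have hG : HasDerivAt G (phi n 0 x) x := by
    have hp := (Qp n).hasDerivAt x
    have hinv : HasDerivAt (fun y:ℝ => (1+y)⁻¹) (-1 / (1+x)^2) x := by
      have h1 : HasDerivAt (fun y:ℝ => 1+y) 1 x := (hasDerivAt_id x).const_add 1
      simpa using h1.fun_inv hx0
    have hd := hp.fun_add (hinv.const_mul ((-1:ℝ)^(n+1)))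
    refine hd.congr_deriv ?_
    simp only [phi, Function.iterate_one]
    field_simp
    simp only [zero_add, Function.iterate_one]
    ring
  have hde : deriv (fun y : ℝ => y^(n+1)/(1+y)) x = deriv G x :=
    Filter.EventuallyEq.deriv_eq (Filter.eventuallyEq_of_mem (isOpen_Ioi.mem_nhds hx) hFG)
  rw [← hF.deriv, hde, hG.deriv]

lemma iteratedDeriv_h_eq (n k : ℕ) :
    Set.EqOn (iteratedDeriv k (h n)) (phi n k) (Set.Ioi (-1:ℝ)) := by
  induction k with
  | zero => intro x hx; simpa [iteratedDeriv_zero] using h_eq_phi_zero n hx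
  | succ k ih =>
    intro x hx
    have hx0 : (1:ℝ) + x ≠ 0 := by
      have : (-1:ℝ) < x := hx
      linarith
    rw [iteratedDeriv_succ]
    have heq : iteratedDeriv k (h n) =ᶠ[nhds x] phi n k :=
      Filter.eventuallyEq_of_mem (isOpen_Ioi.mem_nhds hx) ih
    rw [heq.deriv_eq]
    exact (hasDerivAt_phi n k hx0).deriv

lemma eval_zero_iterate_derivative (p : Polynomial ℝ) (m : ℕ) :
    (Polynomial.derivative^[m] p).eval 0 = (m.factorial : ℝ) * p.coeff m := by
  induction m generalizing p with
  | zero => simp [Polynomial.coeff_zero_eq_eval_zero]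
  | succ m ih =>
    rw [Function.iterate_succ_apply, ih, Polynomial.coeff_derivative, Nat.factorial_succ]
    push_cast
    ring

theorem h_derivatives (n : ℕ) :
    (∀ x : ℝ, 0 < x → iteratedDeriv n (h n) x = ((n + 1).factorial : ℝ) / (1 + x) ^ (n + 2)) ∧
    (∀ k : ℕ, k + 1 ≤ n → iteratedDeriv k (h n) 0 = 0) ∧
    (∀ k : ℕ, k ≤ n → ∀ x : ℝ, 0 < x → 0 < iteratedDeriv k (h n) x) := by
  have hmain : ∀ x : ℝ, 0 < x →
      iteratedDeriv n (h n) x = ((n + 1).factorial : ℝ) / (1 + x) ^ (n + 2) := by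
    intro x hx
    have hx' : (-1:ℝ) < x := by linarith
    rw [iteratedDeriv_h_eq n n hx']
    have hz : Polynomial.derivative^[n+1] (Qp n) = 0 :=
      Polynomial.iterate_derivative_eq_zero (Nat.lt_succ_of_le (Qp_natDegree n))
    have hsg : (-1:ℝ)^(n+n) = 1 := Even.neg_one_pow ⟨n, rfl⟩
    simp [phi, hz, hsg]
  have hzero : ∀ k : ℕ, k + 1 ≤ n → iteratedDeriv k (h n) 0 = 0 := by
    intro k hk
    have h0 : (0:ℝ) ∈ Set.Ioi (-1:ℝ) := by norm_num
    rw [iteratedDeriv_h_eq n k h0]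
    simp only [phi]
    rw [eval_zero_iterate_derivative, Qp_coeff n (k+1) hk]
    have hsg : (-1:ℝ)^(n+k) = -(-1:ℝ)^(n-(k+1)) := by
      rw [show n+k = (n-(k+1)) + (2*k+1) by omega, pow_add, pow_succ, pow_mul]
      norm_num
    rw [hsg]
    norm_num
    ring
  refine ⟨hmain, hzero, ?_⟩
  have hcont : ∀ (k : ℕ) (x : ℝ), 0 < x → ContinuousOn (iteratedDeriv k (h n)) (Set.Icc 0 x) := by
    intro k x hx
    have hsub : Set.Icc (0:ℝ) x ⊆ Set.Ioi (-1:ℝ) := by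
      intro y hy
      have := hy.1
      simp only [Set.mem_Ioi]
      linarith
    have hphi : ContinuousOn (phi n k) (Set.Icc 0 x) := by
      apply ContinuousOn.add
      · exact (Polynomial.continuous _).continuousOn
      · apply ContinuousOn.div continuousOn_const
          (((continuous_const.add continuous_id).pow _).continuousOn)
        intro y hy
        have h1 : (0:ℝ) ≤ y := hy.1
        exact pow_ne_zero _ (by show (1:ℝ) + y ≠ 0; linarith)
    exact hphi.congr (fun y hy => iteratedDeriv_h_eq n k (hsub hy))
  have hdown : ∀ j : ℕ, ∀ x : ℝ, 0 < x → 0 < iteratedDeriv (n - j) (h n) x := by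
    intro j
    induction j with
    | zero =>
      intro x hx
      rw [Nat.sub_zero, hmain x hx]
      positivity
    | succ j ih =>
      intro x hx
      rcases le_or_gt n j with hnj | hjn
      · rw [show n - (j+1) = n - j by omega]
        exact ih x hx
      · set k := n - (j+1) with hkdef
        have hk1 : k + 1 = n - j := by omega
        have hkn : k + 1 ≤ n := by omega
        have hmono : StrictMonoOn (iteratedDeriv k (h n)) (Set.Icc 0 x) := by
          apply strictMonoOn_of_deriv_pos (convex_Icc 0 x) (hcont k x hx)
          intro y hy
          rw [interior_Icc] at hy
          rw [← iteratedDeriv_succ, hk1]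
          exact ih y hy.1
        have hlt := hmono (Set.left_mem_Icc.mpr hx.le)
          (Set.right_mem_Icc.mpr hx.le) hx
        rwa [hzero k hkn] at hlt
  intro k hk x hx
  have := hdown (n - k) x hx
  rwa [show n - (n - k) = k by omega] at this
end
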